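/- arXiv:2503.19515 — 8 statements merged into one kernel-verified Lean document; each statement's English description precedes it below -/
import Mathlib

section
/- Under the stated hypotheses there exists a point α_g ∈ (0,1) that partitions the unit interval into two sets U₁ = (0, α_g) and U₂ = (α_g, 1) such that H(α) > 1 for every α ∈ U₁ and H(α) < 1 for every α ∈ U₂ (i.e., the Bayes factor indicates no outlier for small discounting parameters and an outlier for large ones). -/
open MeasureTheory Set
open Filter

/-- Under the stated hypotheses there exists a point `αg ∈ (0,1)` such that the Bayes
factor `H(α) > 1` for every `α ∈ (0, αg)` and `H(α) < 1` for every `α ∈ (αg, 1)`. -/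
theorem bf_crossing
    (d : ℕ) (Θ : Set (Fin d → ℝ)) (hΘmeas : MeasurableSet Θ)
    (hΘpos : 0 < volume Θ) (hΘfin : volume Θ < ⊤)
    (pr L : (Fin d → ℝ) → ℝ) (hprm : Measurable pr) (hLm : Measurable L)
    (c₁ c₂ : ℝ) (hc₁ : 0 < c₁)
    (hlb : ∀ θ ∈ Θ, c₁ ≤ pr θ) (hub : ∀ θ ∈ Θ, pr θ ≤ c₂)
    (hprint : (∫ θ in Θ, pr θ) = 1)
    (hLnn : ∀ θ, 0 ≤ L θ) (CL : ℝ) (hLbd : ∀ θ, L θ ≤ CL)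
    (hm0pos : 0 < ∫ θ in Θ, L θ * pr θ)
    (H q₁ q₂ : ℝ → ℝ)
    (hH : ∀ α ∈ Ioc (0:ℝ) 1,
      H α = (∫ θ in Θ, L θ * pr θ) /
        ((∫ θ in Θ, pr θ ^ α)⁻¹ * ∫ θ in Θ, L θ * pr θ ^ α))
    (hq₁ : ∀ α : ℝ, q₁ α =
      (∫ θ in Θ, L θ * pr θ ^ α) * ∫ θ in Θ, pr θ ^ α * Real.log (pr θ))
    (hq₂ : ∀ α : ℝ, q₂ α =
      (∫ θ in Θ, pr θ ^ α) * ∫ θ in Θ, L θ * pr θ ^ α * Real.log (pr θ))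
    (hcond1 : 0 < ∫ θ in Θ, L θ * ((volume Θ).toReal * pr θ - 1))
    (hderiv : ∀ α ∈ Ioo (0:ℝ) 1,
      HasDerivAt H
        (((∫ θ in Θ, L θ * pr θ) / (∫ θ in Θ, L θ * pr θ ^ α) ^ 2) *
          (q₁ α - q₂ α)) α)
    (hcross : ∃! αs : ℝ, αs ∈ Ioo (0:ℝ) 1 ∧
      (∀ α ∈ Ioo (0:ℝ) αs, q₁ α - q₂ α < 0) ∧
      q₁ αs - q₂ αs = 0 ∧
      (∀ α ∈ Ioo αs 1, 0 < q₁ α - q₂ α)) :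
    ∃ αg ∈ Ioo (0:ℝ) 1,
      (∀ α ∈ Ioo (0:ℝ) αg, 1 < H α) ∧ (∀ α ∈ Ioo αg 1, H α < 1) := by
  obtain ⟨αs, ⟨hαs, hneg, -, hpos⟩, -⟩ := hcross
  -- basic positivity facts
  obtain ⟨θ₀, hθ₀⟩ : Θ.Nonempty := nonempty_of_measure_ne_zero hΘpos.ne'
  have hc₂ : 0 < c₂ := lt_of_lt_of_le hc₁ (le_trans (hlb θ₀ hθ₀) (hub θ₀ hθ₀))
  have hCL : 0 ≤ CL := le_trans (hLnn θ₀) (hLbd θ₀)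
  have hprpos : ∀ θ ∈ Θ, 0 < pr θ := fun θ hθ => lt_of_lt_of_le hc₁ (hlb θ hθ)
  set v : ℝ := (volume Θ).toReal with hv
  have hvpos : 0 < v := ENNReal.toReal_pos hΘpos.ne' hΘfin.ne
  set Bp : ℝ := max c₂ 1 with hBp
  have hBp0 : 0 < Bp := lt_of_lt_of_le one_pos (le_max_right _ _)
  -- bounds on pr^α for α ∈ [0,1]
  have hubp : ∀ θ ∈ Θ, ∀ α : ℝ, 0 ≤ α → α ≤ 1 → pr θ ^ α ≤ Bp := by
    intro θ hθ α h0 h1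
    rcases le_total (pr θ) 1 with h | h
    · exact le_trans (Real.rpow_le_one (hprpos θ hθ).le h h0) (le_max_right _ _)
    · calc pr θ ^ α ≤ pr θ ^ (1:ℝ) := Real.rpow_le_rpow_of_exponent_le h h1
        _ = pr θ := Real.rpow_one _
        _ ≤ c₂ := hub θ hθ
        _ ≤ Bp := le_max_left _ _
  have hlbp : ∀ θ ∈ Θ, ∀ α : ℝ, 0 ≤ α → α ≤ 1 → min c₁ 1 ≤ pr θ ^ α := by
    intro θ hθ α h0 h1
    rcases le_total (pr θ) 1 with h | h
    · calc min c₁ 1 ≤ c₁ := min_le_left _ _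
        _ ≤ pr θ := hlb θ hθ
        _ = pr θ ^ (1:ℝ) := (Real.rpow_one _).symm
        _ ≤ pr θ ^ α := Real.rpow_le_rpow_of_exponent_ge (hprpos θ hθ) h h1
    · calc min c₁ 1 ≤ 1 := min_le_right _ _
        _ = pr θ ^ (0:ℝ) := (Real.rpow_zero _).symm
        _ ≤ pr θ ^ α := Real.rpow_le_rpow_of_exponent_le h h0
  have hprae : ∀ᵐ θ ∂(volume.restrict Θ), θ ∈ Θ := ae_restrict_mem hΘmeas
  -- generic integrability
  have hint : ∀ (w : (Fin d → ℝ) → ℝ), Measurable w → ∀ W : ℝ, (∀ θ, |w θ| ≤ W) →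
      ∀ α : ℝ, 0 ≤ α → α ≤ 1 → IntegrableOn (fun θ => w θ * pr θ ^ α) Θ := by
    intro w hwm W hW α h0 h1
    refine ⟨(by fun_prop : Measurable fun θ => w θ * pr θ ^ α).aestronglyMeasurable, HasFiniteIntegral.restrict_of_bounded (C := W * Bp) hΘfin ?_⟩
    filter_upwards [hprae] with θ hθ
    have h1' : 0 ≤ pr θ ^ α := Real.rpow_nonneg (hprpos θ hθ).le _
    have : ‖w θ * pr θ ^ α‖ = |w θ| * pr θ ^ α := by
      rw [norm_mul, Real.norm_eq_abs, Real.norm_eq_abs, abs_of_nonneg h1']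
    rw [this]
    exact mul_le_mul (hW θ) (hubp θ hθ α h0 h1) h1' (le_trans (abs_nonneg _) (hW θ))
  have habsL : ∀ θ, |L θ| ≤ CL := fun θ => abs_le.2 ⟨by linarith [hLnn θ, hLbd θ], hLbd θ⟩
  have habs1 : ∀ θ : Fin d → ℝ, |(1:ℝ)| ≤ 1 := fun θ => by simp
  -- generic tendsto statement
  have htends : ∀ (w : (Fin d → ℝ) → ℝ), Measurable w → ∀ W : ℝ, (∀ θ, |w θ| ≤ W) →
      ∀ x₀ : ℝ, Tendsto (fun α => ∫ θ in Θ, w θ * pr θ ^ α) (nhdsWithin x₀ (Ioo (0:ℝ) 1))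
        (nhds (∫ θ in Θ, w θ * pr θ ^ x₀)) := by
    intro w hwm W hW x₀
    refine tendsto_integral_filter_of_dominated_convergence (fun _ => W * Bp) ?_ ?_ ?_ ?_
    · exact Eventually.of_forall fun α => (by fun_prop : Measurable fun θ => w θ * pr θ ^ α).aestronglyMeasurable
    · filter_upwards [self_mem_nhdsWithin] with α hα
      filter_upwards [hprae] with θ hθ
      have h1' : 0 ≤ pr θ ^ α := Real.rpow_nonneg (hprpos θ hθ).le _
      have : ‖w θ * pr θ ^ α‖ = |w θ| * pr θ ^ α := by
        rw [norm_mul, Real.norm_eq_abs, Real.norm_eq_abs, abs_of_nonneg h1']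
      rw [this]
      exact mul_le_mul (hW θ) (hubp θ hθ α hα.1.le hα.2.le) h1' (le_trans (abs_nonneg _) (hW θ))
    · exact integrableOn_const hΘfin.ne
    · filter_upwards [hprae] with θ hθ
      exact (((Real.continuousAt_const_rpow (hprpos θ hθ).ne').tendsto).const_mul (w θ)).mono_left
        nhdsWithin_le_nhds
  -- notation
  set m₀ : ℝ := ∫ θ in Θ, L θ * pr θ with hm₀
  set F : ℝ → ℝ := fun α => ∫ θ in Θ, pr θ ^ α with hF
  set G : ℝ → ℝ := fun α => ∫ θ in Θ, L θ * pr θ ^ α with hG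
  have hintF : ∀ α : ℝ, 0 ≤ α → α ≤ 1 → IntegrableOn (fun θ => pr θ ^ α) Θ := by
    intro α h0 h1
    have := hint (fun _ => 1) measurable_const 1 habs1 α h0 h1
    simpa using this
  have hintG : ∀ α : ℝ, 0 ≤ α → α ≤ 1 → IntegrableOn (fun θ => L θ * pr θ ^ α) Θ :=
    hint L hLm CL habsL
  -- positivity of F
  have hFpos : ∀ α : ℝ, 0 ≤ α → α ≤ 1 → 0 < F α := by
    intro α h0 h1
    have hmin : 0 < min c₁ 1 := lt_min hc₁ one_pos
    have := setIntegral_ge_of_const_le_real (μ := volume) hΘmeas hΘfin.ne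
      (fun θ hθ => hlbp θ hθ α h0 h1) (hintF α h0 h1)
    calc (0:ℝ) < min c₁ 1 * v := by positivity
      _ ≤ F α := this
  -- ∫ L > 0
  have hintL : IntegrableOn L Θ := by
    have := hint L hLm CL habsL 0 le_rfl zero_le_one
    simpa [Real.rpow_zero] using this
  have hintLpr : IntegrableOn (fun θ => L θ * pr θ) Θ := by
    have := hintG 1 zero_le_one le_rfl
    simpa [Real.rpow_one] using this
  have hLintpos : 0 < ∫ θ in Θ, L θ := by
    have hmono : m₀ ≤ ∫ θ in Θ, c₂ * L θ := by
      refine setIntegral_mono_on hintLpr (hintL.const_mul c₂) hΘmeas ?_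
      intro θ hθ
      calc L θ * pr θ ≤ L θ * c₂ := mul_le_mul_of_nonneg_left (hub θ hθ) (hLnn θ)
        _ = c₂ * L θ := mul_comm _ _
    rw [integral_const_mul] at hmono
    nlinarith
  -- positivity of G
  have hGpos : ∀ α : ℝ, 0 ≤ α → α ≤ 1 → 0 < G α := by
    intro α h0 h1
    have hmin : 0 < min c₁ 1 := lt_min hc₁ one_pos
    have hmono : ∫ θ in Θ, min c₁ 1 * L θ ≤ G α := by
      refine setIntegral_mono_on (hintL.const_mul _) (hintG α h0 h1) hΘmeas ?_
      intro θ hθ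
      calc min c₁ 1 * L θ = L θ * min c₁ 1 := mul_comm _ _
        _ ≤ L θ * pr θ ^ α := mul_le_mul_of_nonneg_left (hlbp θ hθ α h0 h1) (hLnn θ)
    rw [integral_const_mul] at hmono
    calc (0:ℝ) < min c₁ 1 * ∫ θ in Θ, L θ := by positivity
      _ ≤ G α := hmono
  -- values at endpoints
  have hF0 : F 0 = v := by
    simp only [hF, Real.rpow_zero]
    simp [hv]; rfl
  have hG0 : G 0 = ∫ θ in Θ, L θ := by simp only [hG, Real.rpow_zero, mul_one]
  have hF1 : F 1 = 1 := by simp only [hF, Real.rpow_one]; exact hprint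
  have hG1 : G 1 = m₀ := by simp only [hG, hm₀, Real.rpow_one]
  -- hcond1 rephrased : ∫ L < v * m₀
  have hcond1' : ∫ θ in Θ, L θ < v * m₀ := by
    have heq : ∫ θ in Θ, L θ * (v * pr θ - 1) = v * m₀ - ∫ θ in Θ, L θ := by
      have : (fun θ => L θ * (v * pr θ - 1)) = fun θ => v * (L θ * pr θ) - L θ := by
        funext θ; ring
      rw [this, integral_sub ((hintLpr.const_mul v)) hintL, integral_const_mul]
    have h2 := hcond1
    rw [heq] at h2
    linarith
  -- limits of H at the two endpoints, within Ioo 0 1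
  have hHeq : H =ᶠ[nhdsWithin (0:ℝ) (Ioo (0:ℝ) 1)] (fun α => m₀ / ((F α)⁻¹ * G α)) := by
    filter_upwards [self_mem_nhdsWithin] with α hα
    exact hH α ⟨hα.1, hα.2.le⟩
  have hHeq1 : H =ᶠ[nhdsWithin (1:ℝ) (Ioo (0:ℝ) 1)] (fun α => m₀ / ((F α)⁻¹ * G α)) := by
    filter_upwards [self_mem_nhdsWithin] with α hα
    exact hH α ⟨hα.1, hα.2.le⟩
  haveI hne0 : (nhdsWithin (0:ℝ) (Ioo (0:ℝ) 1)).NeBot := by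
    refine mem_closure_iff_nhdsWithin_neBot.mp ?_
    rw [closure_Ioo one_ne_zero.symm]
    exact ⟨le_rfl, zero_le_one⟩
  haveI hne1 : (nhdsWithin (1:ℝ) (Ioo (0:ℝ) 1)).NeBot := by
    refine mem_closure_iff_nhdsWithin_neBot.mp ?_
    rw [closure_Ioo one_ne_zero.symm]
    exact ⟨zero_le_one, le_rfl⟩
  have hFt : ∀ x₀ : ℝ, Tendsto F (nhdsWithin x₀ (Ioo (0:ℝ) 1)) (nhds (F x₀)) := by
    intro x₀
    have := htends (fun _ => 1) measurable_const 1 habs1 x₀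
    simpa using this
  have hGt : ∀ x₀ : ℝ, Tendsto G (nhdsWithin x₀ (Ioo (0:ℝ) 1)) (nhds (G x₀)) :=
    htends L hLm CL habsL
  have hHt : ∀ x₀ : ℝ, 0 ≤ x₀ → x₀ ≤ 1 →
      Tendsto (fun α => m₀ / ((F α)⁻¹ * G α)) (nhdsWithin x₀ (Ioo (0:ℝ) 1))
        (nhds (m₀ / ((F x₀)⁻¹ * G x₀))) := by
    intro x₀ h0 h1
    refine Tendsto.div tendsto_const_nhds (Tendsto.mul ((hFt x₀).inv₀ (hFpos x₀ h0 h1).ne') (hGt x₀)) ?_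
    have := hFpos x₀ h0 h1
    have := hGpos x₀ h0 h1
    positivity
  -- limit at 1 is 1
  have hlim1 : Tendsto H (nhdsWithin (1:ℝ) (Ioo (0:ℝ) 1)) (nhds 1) := by
    have := hHt 1 zero_le_one le_rfl
    rw [hF1, hG1] at this
    have h1 : m₀ / ((1:ℝ)⁻¹ * m₀) = 1 := by
      rw [inv_one, one_mul, div_self hm0pos.ne']
    rw [h1] at this
    exact Tendsto.congr' hHeq1.symm this
  -- limit at 0 exceeds 1
  have hlim0 : Tendsto H (nhdsWithin (0:ℝ) (Ioo (0:ℝ) 1)) (nhds (m₀ / (v⁻¹ * ∫ θ in Θ, L θ))) := by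
    have := hHt 0 le_rfl zero_le_one
    rw [hF0, hG0] at this
    exact Tendsto.congr' hHeq.symm this
  have hℓ₀ : 1 < m₀ / (v⁻¹ * ∫ θ in Θ, L θ) := by
    rw [one_lt_div (by positivity)]
    rw [inv_mul_lt_iff₀ hvpos]
    exact hcond1'
  -- monotonicity
  have hanti : StrictAntiOn H (Ioc 0 αs) := by
    refine strictAntiOn_of_deriv_neg (convex_Ioc _ _) ?_ ?_
    · intro x hx
      exact ((hderiv x ⟨hx.1, lt_of_le_of_lt hx.2 hαs.2⟩).continuousAt).continuousWithinAt
    · rw [interior_Ioc]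
      intro x hx
      have hx' : x ∈ Ioo (0:ℝ) 1 := ⟨hx.1, lt_trans hx.2 hαs.2⟩
      rw [(hderiv x hx').deriv]
      refine mul_neg_of_pos_of_neg ?_ (hneg x hx)
      have := hGpos x hx'.1.le hx'.2.le
      rw [← hG] at *
      positivity
  have hmono : StrictMonoOn H (Ioo αs 1) := by
    refine strictMonoOn_of_deriv_pos (convex_Ioo _ _) ?_ ?_
    · intro x hx
      exact ((hderiv x ⟨lt_trans hαs.1 hx.1, hx.2⟩).continuousAt).continuousWithinAt
    · rw [interior_Ioo]
      intro x hx
      have hx' : x ∈ Ioo (0:ℝ) 1 := ⟨lt_trans hαs.1 hx.1, hx.2⟩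
      rw [(hderiv x hx').deriv]
      refine mul_pos ?_ (hpos x hx)
      have := hGpos x hx'.1.le hx'.2.le
      rw [← hG] at *
      positivity
  -- H ≤ 1 on (αs, 1)
  have hle1 : ∀ γ ∈ Ioo αs 1, H γ ≤ 1 := by
    intro γ hγ
    refine ge_of_tendsto hlim1 ?_
    have hev : ∀ᶠ δ in nhdsWithin (1:ℝ) (Ioo (0:ℝ) 1), γ < δ :=
      eventually_nhdsWithin_of_eventually_nhds (eventually_gt_nhds hγ.2)
    filter_upwards [self_mem_nhdsWithin, hev] with δ hδ hγδ
    exact (hmono hγ ⟨lt_trans hγ.1 hγδ, hδ.2⟩ hγδ).le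
  have hlt1 : ∀ β ∈ Ioo αs 1, H β < 1 := by
    intro β hβ
    have hmid : (β + 1) / 2 ∈ Ioo αs 1 := ⟨by nlinarith [hβ.1, hβ.2], by nlinarith [hβ.2]⟩
    have h1 : H β < H ((β + 1) / 2) := hmono hβ hmid (by nlinarith [hβ.2])
    exact lt_of_lt_of_le h1 (hle1 _ hmid)
  -- H αs ≤ 1 by continuity
  haveI hneαs : (nhdsWithin αs (Ioo αs 1)).NeBot := by
    refine mem_closure_iff_nhdsWithin_neBot.mp ?_
    rw [closure_Ioo hαs.2.ne]
    exact ⟨le_rfl, hαs.2.le⟩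
  have hHαs : H αs ≤ 1 := by
    have hcont : Tendsto H (nhdsWithin αs (Ioo αs 1)) (nhds (H αs)) :=
      ((hderiv αs hαs).continuousAt.continuousWithinAt).tendsto
    refine le_of_tendsto hcont ?_
    filter_upwards [self_mem_nhdsWithin] with δ hδ
    exact hle1 δ hδ
  -- find a with 0 < a < αs and 1 < H a
  obtain ⟨a, haIoo, haαs, haH⟩ :
      ∃ a, a ∈ Ioo (0:ℝ) 1 ∧ a < αs ∧ 1 < H a := by
    have h1 : ∀ᶠ α in nhdsWithin (0:ℝ) (Ioo (0:ℝ) 1), 1 < H α :=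
      hlim0.eventually (eventually_gt_nhds hℓ₀)
    have h2 : ∀ᶠ α in nhdsWithin (0:ℝ) (Ioo (0:ℝ) 1), α < αs :=
      eventually_nhdsWithin_of_eventually_nhds (eventually_lt_nhds hαs.1)
    obtain ⟨a, ha1, ha2, ha3⟩ := ((eventually_mem_nhdsWithin).and (h2.and h1)).exists
    exact ⟨a, ha1, ha2, ha3⟩
  -- IVT on [a, αs]
  have hHcont : ContinuousOn H (Icc a αs) := by
    intro x hx
    exact ((hderiv x ⟨lt_of_lt_of_le haIoo.1 hx.1, lt_of_le_of_lt hx.2 hαs.2⟩).continuousAt).continuousWithinAt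
  obtain ⟨αg, hαgmem, hαgeq⟩ :
      ∃ αg ∈ Icc a αs, H αg = 1 := by
    have := intermediate_value_Icc' haαs.le hHcont
    have h1 : (1:ℝ) ∈ Icc (H αs) (H a) := ⟨hHαs, haH.le⟩
    obtain ⟨αg, h1', h2'⟩ := this h1
    exact ⟨αg, h1', h2'⟩
  have hαg0 : 0 < αg := lt_of_lt_of_le haIoo.1 hαgmem.1
  have hαgαs : αg ≤ αs := hαgmem.2
  refine ⟨αg, ⟨hαg0, lt_of_le_of_lt hαgαs hαs.2⟩, ?_, ?_⟩
  · intro α hα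
    have h1 : α ∈ Ioc (0:ℝ) αs := ⟨hα.1, le_trans hα.2.le hαgαs⟩
    have h2 : αg ∈ Ioc (0:ℝ) αs := ⟨hαg0, hαgαs⟩
    have := hanti h1 h2 hα.2
    rwa [hαgeq] at this
  · intro α hα
    rcases le_or_gt α αs with h | h
    · have h1 : α ∈ Ioc (0:ℝ) αs := ⟨lt_trans hαg0 hα.1, h⟩
      have h2 : αg ∈ Ioc (0:ℝ) αs := ⟨hαg0, hαgαs⟩
      have := hanti h2 h1 hα.1
      rwa [hαgeq] at this
    · exact hlt1 α ⟨h, hα.2⟩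
end

section
/- For every α ∈ (0,1], det(Σ_L + α⁻¹Σ_*) − det(Σ_L + Σ_*) ≥ (α^(−p) − 1)·det(Σ_*) ≥ 0. -/
open Matrix Finset

/-- Product inequality: for nonnegative `μ i` and `c ≥ 1`,
`∏ (μ i + c) - ∏ (μ i + 1) ≥ c ^ card - 1`. -/
lemma aux_prod_ineq {ι : Type*} (s : Finset ι) (μ : ι → ℝ) (c : ℝ)
    (hμ : ∀ i ∈ s, 0 ≤ μ i) (hc : 1 ≤ c) :
    c ^ s.card - 1 ≤ (∏ i ∈ s, (μ i + c)) - ∏ i ∈ s, (μ i + 1) := by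
  induction s using Finset.cons_induction with
  | empty => simp
  | cons a s ha ih =>
    have hμa : 0 ≤ μ a := hμ a (Finset.mem_cons_self a s)
    have hμs : ∀ i ∈ s, 0 ≤ μ i := fun i hi => hμ i (Finset.mem_cons_of_mem hi)
    have h1 : (1 : ℝ) ≤ ∏ i ∈ s, (μ i + 1) := by
      calc (1:ℝ) = ∏ _i ∈ s, (1:ℝ) := Finset.prod_const_one.symm
        _ ≤ ∏ i ∈ s, (μ i + 1) :=
          Finset.prod_le_prod (by norm_num) (fun i hi => by linarith [hμs i hi])
    have hle : (∏ i ∈ s, (μ i + 1)) ≤ ∏ i ∈ s, (μ i + c) := by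
      apply Finset.prod_le_prod
      · intro i hi; linarith [hμs i hi]
      · intro i hi; linarith
    have ihs := ih hμs
    rw [Finset.prod_cons, Finset.prod_cons, Finset.card_cons]
    have hcpow : (1:ℝ) ≤ c ^ s.card := one_le_pow₀ hc
    have hA := mul_le_mul_of_nonneg_left ihs (le_trans zero_le_one hc)
    have hB := mul_le_mul_of_nonneg_left h1 (sub_nonneg.2 hc)
    have hps := pow_succ c s.card
    nlinarith [mul_nonneg hμa (sub_nonneg.2 hle)]

lemma aux_det_add_smul_one {p : ℕ} (M : Matrix (Fin p) (Fin p) ℝ)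
    (hM : M.IsHermitian) (c : ℝ) :
    (M + c • 1).det = ∏ i, (hM.eigenvalues i + c) := by
  have hU : (hM.eigenvectorUnitary : Matrix (Fin p) (Fin p) ℝ) *
      (star (hM.eigenvectorUnitary : Matrix (Fin p) (Fin p) ℝ)) = 1 :=
    Matrix.mem_unitaryGroup_iff.mp hM.eigenvectorUnitary.2
  have key : M + c • 1 = (hM.eigenvectorUnitary : Matrix (Fin p) (Fin p) ℝ)
      * (diagonal (RCLike.ofReal ∘ hM.eigenvalues) + c • 1)
      * (star (hM.eigenvectorUnitary : Matrix (Fin p) (Fin p) ℝ)) := by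
    rw [Matrix.mul_add, Matrix.add_mul]
    congr 1
    · exact hM.spectral_theorem
    · rw [Matrix.mul_smul, Matrix.smul_mul, Matrix.mul_one, hU]
  rw [key, Matrix.det_mul_right_comm, hU, Matrix.one_mul]
  rw [Matrix.smul_one_eq_diagonal]
  rw [Matrix.diagonal_add, Matrix.det_diagonal]
  simp

set_option maxHeartbeats 1000000 in
/-- For every `α ∈ (0,1]`,
`det(Σ_L + α⁻¹ Σ_*) − det(Σ_L + Σ_*) ≥ (α^(−p) − 1) det(Σ_*) ≥ 0`. -/
theorem det_difference_lower_bound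
    (p : ℕ) (hp : 0 < p)
    (SL Ss : Matrix (Fin p) (Fin p) ℝ) (hSL : SL.PosDef) (hSs : Ss.PosDef)
    (α : ℝ) (hα : α ∈ Set.Ioc (0:ℝ) 1) :
    (α ^ (-(p : ℝ)) - 1) * Ss.det ≤ (SL + α⁻¹ • Ss).det - (SL + Ss).det ∧
    0 ≤ (α ^ (-(p : ℝ)) - 1) * Ss.det := by
  obtain ⟨hα0, hα1⟩ := hα
  set c : ℝ := α⁻¹ with hc_def
  have hc1 : 1 ≤ c := one_le_inv_iff₀.mpr ⟨hα0, hα1⟩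
  -- rewrite the rpow expression
  have hrpow : α ^ (-(p : ℝ)) = c ^ p := by
    rw [Real.rpow_neg hα0.le, Real.rpow_natCast, hc_def, inv_pow]
  -- square root of Ss
  set Q : Matrix (Fin p) (Fin p) ℝ := (open MatrixOrder in CFC.sqrt Ss) with hQdef
  have hQps : Q.PosSemidef := (open MatrixOrder in (CFC.sqrt_nonneg Ss).posSemidef)
  have hQQ : Q * Q = Ss := (open MatrixOrder in CFC.sqrt_mul_sqrt_self Ss hSs.posSemidef.nonneg)
  have hdetQ : Q.det * Q.det = Ss.det := by rw [← Matrix.det_mul, hQQ]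
  have hdetQ_ne : Q.det ≠ 0 := by
    intro h
    have := hSs.det_pos
    rw [← hdetQ, h, mul_zero] at this
    exact lt_irrefl _ this
  haveI : Invertible Q := Q.invertibleOfIsUnitDet (isUnit_iff_ne_zero.mpr hdetQ_ne)
  have hQinvH : (Q⁻¹).IsHermitian := hQps.1.inv
  set M : Matrix (Fin p) (Fin p) ℝ := Q⁻¹ * SL * Q⁻¹ with hMdef
  have hMps : M.PosSemidef := by
    have := hSL.posSemidef.mul_mul_conjTranspose_same Q⁻¹
    rwa [hQinvH.eq] at this
  have hM : M.IsHermitian := hMps.1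
  -- key identity
  have key : ∀ t : ℝ, (SL + t • Ss).det = Ss.det * (M + t • 1).det := by
    intro t
    have h1 : Q * (M + t • 1) * Q = SL + t • Ss := by
      rw [Matrix.mul_add, Matrix.add_mul]
      congr 1
      · rw [hMdef, ← Matrix.mul_assoc, ← Matrix.mul_assoc,
          Matrix.mul_inv_of_invertible, Matrix.one_mul, Matrix.mul_assoc,
          Matrix.inv_mul_of_invertible, Matrix.mul_one]
      · rw [Matrix.mul_smul, Matrix.mul_one, Matrix.smul_mul, hQQ]
    calc (SL + t • Ss).det = (Q * (M + t • 1) * Q).det := by rw [h1]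
      _ = Q.det * (M + t • 1).det * Q.det := by rw [Matrix.det_mul, Matrix.det_mul]
      _ = Ss.det * (M + t • 1).det := by rw [← hdetQ]; ring
  have hdet_c := key c
  have hdet_1 := key 1
  rw [aux_det_add_smul_one M hM] at hdet_c hdet_1
  have hμ : ∀ i ∈ (Finset.univ : Finset (Fin p)), 0 ≤ hM.eigenvalues i :=
    fun i _ => hMps.eigenvalues_nonneg i
  have hprod := aux_prod_ineq Finset.univ hM.eigenvalues c hμ hc1
  rw [Finset.card_univ, Fintype.card_fin] at hprod
  have hSsdet : 0 < Ss.det := hSs.det_pos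
  have hcpow : (1:ℝ) ≤ c ^ p := one_le_pow₀ hc1
  constructor
  · have h1s : SL + Ss = SL + (1:ℝ) • Ss := by rw [one_smul]
    rw [hrpow, h1s, hdet_c, hdet_1]
    calc (c ^ p - 1) * Ss.det
        ≤ ((∏ i, (hM.eigenvalues i + c)) - ∏ i, (hM.eigenvalues i + 1)) * Ss.det := by
          apply mul_le_mul_of_nonneg_right hprod hSsdet.le
      _ = Ss.det * (∏ i, (hM.eigenvalues i + c)) -
          Ss.det * (∏ i, (hM.eigenvalues i + 1)) := by ring
  · rw [hrpow]
    exact mul_nonneg (by linarith) hSsdet.le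
end

section
/- The function κ is differentiable at every α ∈ (0,1) with derivative κ′(α) = −(n/(2α²))·κ(α)·tr((Σ_L + α⁻¹Σ_*)⁻¹ Σ_*), this derivative is strictly negative, and consequently κ is strictly decreasing on (0,1). -/
open Matrix

namespace KappaAux

variable {p : ℕ}

/-- The determinant as a continuous multilinear map in the rows. -/
noncomputable def detCML (p : ℕ) :
    ContinuousMultilinearMap ℝ (fun _ : Fin p => (Fin p → ℝ)) ℝ :=
  MultilinearMap.mkContinuous
    (Matrix.detRowAlternating : (Fin p → ℝ) [⋀^Fin p]→ₗ[ℝ] ℝ).toMultilinearMap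
    (Nat.factorial p) (by
      intro m
      have h1 : (Matrix.detRowAlternating : (Fin p → ℝ) [⋀^Fin p]→ₗ[ℝ] ℝ).toMultilinearMap m
          = (Matrix.of m).det := rfl
      rw [h1, Matrix.det_apply']
      calc ‖∑ σ : Equiv.Perm (Fin p),
              (Equiv.Perm.sign σ : ℤ) * ∏ i, Matrix.of m (σ i) i‖
          ≤ ∑ σ : Equiv.Perm (Fin p),
              ‖((Equiv.Perm.sign σ : ℤ) : ℝ) * ∏ i, Matrix.of m (σ i) i‖ := norm_sum_le _ _
        _ ≤ ∑ _σ : Equiv.Perm (Fin p), ∏ i, ‖m i‖ := by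
            refine Finset.sum_le_sum fun σ _ => ?_
            rw [norm_mul]
            have hsign : ‖((Equiv.Perm.sign σ : ℤ) : ℝ)‖ = 1 := by
              rcases Int.units_eq_one_or (Equiv.Perm.sign σ) with h | h <;> simp [h]
            rw [hsign, one_mul, norm_prod]
            calc ∏ i, ‖Matrix.of m (σ i) i‖ ≤ ∏ i, ‖m (σ i)‖ := by
                  refine Finset.prod_le_prod (fun i _ => norm_nonneg _) fun i _ => ?_
                  exact norm_le_pi_norm (m (σ i)) i
              _ = ∏ i, ‖m i‖ := Equiv.prod_comp σ fun j => ‖m j‖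
        _ = (Nat.factorial p : ℝ) * ∏ i, ‖m i‖ := by
            rw [Finset.sum_const, Finset.card_univ, Fintype.card_perm, Fintype.card_fin,
              nsmul_eq_mul])

theorem sum_det_updateRow (A N : Matrix (Fin p) (Fin p) ℝ) :
    ∑ i, (A.updateRow i (N i)).det = (A.adjugate * N).trace := by
  have h : ∀ i, (A.updateRow i (N i)).det = ∑ j, N i j * A.adjugate j i := by
    intro i
    have hb : (N i) = ∑ j, (N i j) • (Pi.single j 1 : Fin p → ℝ) := by
      funext k
      simp [Pi.single_apply]
    rw [← Matrix.cramer_transpose_apply]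
    conv_lhs => rw [hb]
    rw [map_sum, Finset.sum_apply]
    refine Finset.sum_congr rfl fun j _ => ?_
    rw [LinearMap.map_smul, Pi.smul_apply, Matrix.cramer_transpose_apply, smul_eq_mul,
      Matrix.adjugate_apply]
  simp_rw [h, Matrix.trace, Matrix.diag, Matrix.mul_apply]
  rw [Finset.sum_comm]
  exact Finset.sum_congr rfl fun j _ => Finset.sum_congr rfl fun i _ => mul_comm _ _

theorem hasDerivAt_det_affine (M N : Matrix (Fin p) (Fin p) ℝ) (t : ℝ) :
    HasDerivAt (fun s : ℝ => (M + s • N).det) (((M + t • N).adjugate * N).trace) t := by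
  let Mf : Fin p → Fin p → ℝ := M
  let Nf : Fin p → Fin p → ℝ := N
  have hc : HasDerivAt (fun s : ℝ => Mf + s • Nf) Nf t := by
    simpa using ((hasDerivAt_id t).smul_const Nf).const_add Mf
  have hF := ((detCML p).hasFDerivAt (Mf + t • Nf)).comp_hasDerivAt t hc
  have heq : (⇑(detCML p) ∘ fun s : ℝ => Mf + s • Nf)
      = fun s : ℝ => (M + s • N).det := rfl
  rw [heq] at hF
  refine hF.congr_deriv ?_
  rw [ContinuousMultilinearMap.linearDeriv_apply]
  rw [← sum_det_updateRow (M + t • N) N]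
  rfl

theorem posDef_smul {c : ℝ} (hc : 0 < c) {M : Matrix (Fin p) (Fin p) ℝ} (hM : M.PosDef) :
    (c • M).PosDef := by
  refine PosDef.of_dotProduct_mulVec_pos ?_ fun x hx => ?_
  · unfold Matrix.IsHermitian
    rw [conjTranspose_smul, hM.1.eq]
    norm_num
  · rw [smul_mulVec, dotProduct_smul, smul_eq_mul]
    exact mul_pos hc (hM.dotProduct_mulVec_pos hx)

theorem posDef_trace_pos (hp : 0 < p) {M : Matrix (Fin p) (Fin p) ℝ} (hM : M.PosDef) :
    0 < M.trace := by
  have : Nonempty (Fin p) := ⟨⟨0, hp⟩⟩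
  have h : ∀ i, 0 < M i i := by
    intro i
    have h0 : (Pi.single i 1 : Fin p → ℝ) ≠ 0 := by
      intro h
      have := congrFun h i
      simp at this
    have := hM.dotProduct_mulVec_pos h0
    simpa [dotProduct, Pi.single_apply, mulVec_single] using this
  exact Finset.sum_pos (fun i _ => h i) Finset.univ_nonempty

open scoped MatrixOrder in
theorem trace_mul_pos (hp : 0 < p) {M N : Matrix (Fin p) (Fin p) ℝ}
    (hM : M.PosDef) (hN : N.PosDef) : 0 < (M * N).trace := by
  set S := CFC.sqrt N with hSdef
  have hS2 : S * S = N := CFC.sqrt_mul_sqrt_self N hN.posSemidef.nonneg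
  have hSH : S.IsHermitian := (CFC.sqrt_nonneg N).posSemidef.isHermitian
  have hSdetne : S.det ≠ 0 := by
    intro h
    have : N.det = 0 := by rw [← hS2, det_mul, h, mul_zero]
    exact hN.det_pos.ne' this
  have hSinv : S⁻¹ * S = 1 := Matrix.nonsing_inv_mul S (isUnit_iff_ne_zero.mpr hSdetne)
  have hconj : (S * M * S).PosDef := by
    refine PosDef.of_dotProduct_mulVec_pos ?_ fun x hx => ?_
    · unfold Matrix.IsHermitian
      rw [conjTranspose_mul, conjTranspose_mul, hSH.eq, hM.1.eq, Matrix.mul_assoc]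
    · have hSx : S *ᵥ x ≠ 0 := by
        intro h
        apply hx
        have : S⁻¹ *ᵥ (S *ᵥ x) = S⁻¹ *ᵥ 0 := by rw [h]
        rwa [mulVec_mulVec, hSinv, one_mulVec, mulVec_zero] at this
      have key : star x ⬝ᵥ ((S * M * S) *ᵥ x) = star (S *ᵥ x) ⬝ᵥ (M *ᵥ (S *ᵥ x)) := by
        rw [← mulVec_mulVec, ← mulVec_mulVec, dotProduct_mulVec]
        congr 1
        · funext j
          simp only [vecMul, star_trivial, dotProduct, mulVec]
          refine Finset.sum_congr rfl fun k _ => ?_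
          have : S k j = S j k := by
            have := hSH.eq
            have h2 := congrFun (congrFun this k) j
            simpa [conjTranspose_apply] using h2.symm
          rw [this, mul_comm]
      rw [key]
      exact hM.dotProduct_mulVec_pos hSx
  have htr : (M * N).trace = (S * M * S).trace := by
    rw [Matrix.trace_mul_cycle S M S, hS2, Matrix.trace_mul_comm]
  rw [htr]
  exact posDef_trace_pos hp hconj

end KappaAux

open KappaAux

/-- `κ` is differentiable on `(0,1)` with derivative
`κ′(α) = −(n/(2α²)) κ(α) tr((Σ_L + α⁻¹Σ_*)⁻¹ Σ_*)`, this derivative is strictly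
negative, and consequently `κ` is strictly decreasing on `(0,1)`. -/
theorem kappa_deriv_neg_strictAnti
    (p n : ℕ) (hp : 0 < p) (hn : 0 < n)
    (SL Ss : Matrix (Fin p) (Fin p) ℝ) (hSL : SL.PosDef) (hSs : Ss.PosDef) :
    (∀ α ∈ Set.Ioo (0:ℝ) 1,
      HasDerivAt
        (fun β : ℝ => (SL + β⁻¹ • Ss).det ^ ((n : ℝ) / 2) / (SL + Ss).det ^ ((n : ℝ) / 2))
        (-((n : ℝ) / (2 * α ^ 2)) *
          ((SL + α⁻¹ • Ss).det ^ ((n : ℝ) / 2) / (SL + Ss).det ^ ((n : ℝ) / 2)) *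
          Matrix.trace ((SL + α⁻¹ • Ss)⁻¹ * Ss)) α ∧
      -((n : ℝ) / (2 * α ^ 2)) *
          ((SL + α⁻¹ • Ss).det ^ ((n : ℝ) / 2) / (SL + Ss).det ^ ((n : ℝ) / 2)) *
          Matrix.trace ((SL + α⁻¹ • Ss)⁻¹ * Ss) < 0) ∧
    StrictAntiOn
      (fun β : ℝ => (SL + β⁻¹ • Ss).det ^ ((n : ℝ) / 2) / (SL + Ss).det ^ ((n : ℝ) / 2))
      (Set.Ioo (0:ℝ) 1) := by
  have hcpos : 0 < (SL + Ss).det ^ ((n : ℝ) / 2) :=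
    Real.rpow_pos_of_pos (hSL.add hSs).det_pos _
  have key : ∀ α ∈ Set.Ioo (0:ℝ) 1,
      HasDerivAt
        (fun β : ℝ => (SL + β⁻¹ • Ss).det ^ ((n : ℝ) / 2) / (SL + Ss).det ^ ((n : ℝ) / 2))
        (-((n : ℝ) / (2 * α ^ 2)) *
          ((SL + α⁻¹ • Ss).det ^ ((n : ℝ) / 2) / (SL + Ss).det ^ ((n : ℝ) / 2)) *
          Matrix.trace ((SL + α⁻¹ • Ss)⁻¹ * Ss)) α ∧
      -((n : ℝ) / (2 * α ^ 2)) *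
          ((SL + α⁻¹ • Ss).det ^ ((n : ℝ) / 2) / (SL + Ss).det ^ ((n : ℝ) / 2)) *
          Matrix.trace ((SL + α⁻¹ • Ss)⁻¹ * Ss) < 0 := by
    intro α hα
    obtain ⟨hα0, hα1⟩ := hα
    have hαne : α ≠ 0 := hα0.ne'
    have hαinv : 0 < α⁻¹ := inv_pos.mpr hα0
    have hA : (SL + α⁻¹ • Ss).PosDef := hSL.add (posDef_smul hαinv hSs)
    have hd : 0 < (SL + α⁻¹ • Ss).det := hA.det_pos
    have htr : 0 < Matrix.trace ((SL + α⁻¹ • Ss)⁻¹ * Ss) := trace_mul_pos hp hA.inv hSs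
    -- the derivative
    have h1 := hasDerivAt_det_affine SL Ss (α⁻¹)
    have hinv : HasDerivAt (fun β : ℝ => β⁻¹) (-(α ^ 2)⁻¹) α := hasDerivAt_inv hαne
    have h2 := HasDerivAt.comp α h1 hinv
    simp only [Function.comp_def] at h2
    have h3 := h2.rpow_const (p := (n : ℝ) / 2) (Or.inl hd.ne')
    have h4 := h3.div_const ((SL + Ss).det ^ ((n : ℝ) / 2))
    have htr_eq : Matrix.trace ((SL + α⁻¹ • Ss)⁻¹ * Ss)
        = (SL + α⁻¹ • Ss).det⁻¹ * Matrix.trace ((SL + α⁻¹ • Ss).adjugate * Ss) := by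
      rw [Matrix.inv_def, Ring.inverse_eq_inv, Matrix.smul_mul, Matrix.trace_smul, smul_eq_mul]
    have hpow : (SL + α⁻¹ • Ss).det ^ ((n : ℝ) / 2 - 1)
        = (SL + α⁻¹ • Ss).det ^ ((n : ℝ) / 2) / (SL + α⁻¹ • Ss).det := by
      rw [Real.rpow_sub hd, Real.rpow_one]
    constructor
    · refine h4.congr_deriv ?_
      rw [htr_eq, hpow]
      field_simp
    · rw [htr_eq] at htr ⊢
      have hnn : (0:ℝ) < (n : ℝ) / (2 * α ^ 2) := by positivity
      have h5 : 0 < (SL + α⁻¹ • Ss).det ^ ((n : ℝ) / 2) / (SL + Ss).det ^ ((n : ℝ) / 2) := by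
        positivity
      have := mul_pos (mul_pos hnn h5) htr
      linarith
  refine ⟨key, ?_⟩
  apply strictAntiOn_of_deriv_neg (convex_Ioo 0 1)
  · intro x hx
    exact ((key x hx).1).continuousAt.continuousWithinAt
  · intro x hx
    rw [interior_Ioo] at hx
    rw [(key x hx).1.deriv]
    exact (key x hx).2
end

section
/- The Bayes factor H is differentiable at every α ∈ (0,1) with derivative H′(α) = (H(α)/(2α))·tr(−n·B̃(α)⁻¹Σ_* + α·Υ(α)·Ã + α(1−α)·Υ(α)·Σ_L·B̃(α)⁻¹·Ã), where Ã = (Y − M_*)V⁻¹(Y − M_*)ᵀ, B̃(α) = αΣ_L + Σ_*, and Υ(α) = (Σ_L + Σ_*)⁻¹ Σ_* B̃(α)⁻¹. -/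
open Matrix

attribute [local instance] Matrix.linftyOpNormedRing Matrix.linftyOpNormedAlgebra

private lemma lem_posDef {p : ℕ} {SL Ss : Matrix (Fin p) (Fin p) ℝ}
    (hSL : SL.PosDef) (hSs : Ss.PosDef) {β : ℝ} (hβ : 0 < β) :
    (β • SL + Ss).PosDef := by
  refine Matrix.PosDef.add (Matrix.PosDef.of_dotProduct_mulVec_pos ?_ fun x hx => ?_) hSs
  · show (β • SL)ᴴ = β • SL
    rw [conjTranspose_smul, star_trivial, hSL.1]
  rw [smul_mulVec, dotProduct_smul, smul_eq_mul]
  exact mul_pos hβ (hSL.dotProduct_mulVec_pos hx)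

private lemma lem_repr {p : ℕ} (SL Ss : Matrix (Fin p) (Fin p) ℝ) (α : ℝ)
    (hdet : IsUnit (α • SL + Ss).det) (β : ℝ) :
    β • SL + Ss = (α • SL + Ss) * (1 + (β - α) • ((α • SL + Ss)⁻¹ * SL)) := by
  rw [Matrix.mul_add, Matrix.mul_one, Matrix.mul_smul, ← Matrix.mul_assoc,
    Matrix.mul_nonsing_inv _ hdet, Matrix.one_mul, sub_smul]
  abel

private lemma lem_det_deriv {p : ℕ} (SL Ss : Matrix (Fin p) (Fin p) ℝ) (α : ℝ)
    (hdet : IsUnit (α • SL + Ss).det) :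
    HasDerivAt (fun β : ℝ => (β • SL + Ss).det)
      ((α • SL + Ss).det * trace ((α • SL + Ss)⁻¹ * SL)) α := by
  set X := (α • SL + Ss)⁻¹ * SL with hX
  set Q := (Matrix.det (1 + (Polynomial.X : Polynomial ℝ) • X.map Polynomial.C)).divX.divX with hQ
  have hfun : (fun β : ℝ => (β • SL + Ss).det) =
      fun β => (α • SL + Ss).det *
        (1 + trace X * (β - α) + Q.eval (β - α) * (β - α) ^ 2) := by
    funext β
    rw [lem_repr SL Ss α hdet β, det_mul, Matrix.det_one_add_smul]
  rw [hfun]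
  have h1 : HasDerivAt (fun β : ℝ => 1 + trace X * (β - α)) (trace X) α := by
    simpa using (((hasDerivAt_id α).sub_const α).const_mul (trace X)).const_add 1
  have ha : HasDerivAt (fun β : ℝ => Q.eval (β - α)) (Q.derivative.eval (α - α) * 1) α := by
    have := HasDerivAt.comp_of_eq (hh₂ := Q.hasDerivAt (α - α))
      (hh := (hasDerivAt_id α).sub_const α) (hy := rfl)
    simpa [Function.comp_def] using this
  have hb : HasDerivAt (fun β : ℝ => (β - α) ^ 2) (2 * (α - α) ^ 1 * 1) α :=
    ((hasDerivAt_id α).sub_const α).pow 2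
  have h4 := (h1.add (ha.mul hb)).const_mul ((α • SL + Ss).det)
  simpa using h4

private lemma lem_inv_deriv {p : ℕ} (SL Ss : Matrix (Fin p) (Fin p) ℝ) (α : ℝ)
    (hu : IsUnit (α • SL + Ss)) :
    HasDerivAt (fun β : ℝ => (β • SL + Ss)⁻¹)
      (-((α • SL + Ss)⁻¹ * SL * (α • SL + Ss)⁻¹)) α := by
  have hBder : HasDerivAt (fun β : ℝ => β • SL + Ss) SL α := by
    have h0 := ((hasDerivAt_id α).smul_const SL).add_const Ss
    simp only [id_eq, one_smul] at h0
    exact h0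
  have hF := hasFDerivAt_ringInverse (𝕜 := ℝ) hu.unit
  rw [hu.unit_spec] at hF
  have h := hF.comp_hasDerivAt α hBder
  simp only [Function.comp_def, ← Matrix.nonsing_inv_eq_ringInverse] at h
  simp [ContinuousLinearMap.mulLeftRight_apply, Matrix.coe_units_inv, hu.unit_spec] at h
  exact h

private lemma lem_trace_deriv {p : ℕ} (SL Ss C Aq : Matrix (Fin p) (Fin p) ℝ) (α : ℝ)
    (hu : IsUnit (α • SL + Ss)) :
    HasDerivAt (fun β : ℝ => trace (C * (β • SL + Ss)⁻¹ * Aq))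
      (-trace (C * (α • SL + Ss)⁻¹ * SL * (α • SL + Ss)⁻¹ * Aq)) α := by
  let L : Matrix (Fin p) (Fin p) ℝ →ₗ[ℝ] ℝ :=
    { toFun := fun Z => trace (C * Z * Aq)
      map_add' := fun Z W => by simp [Matrix.mul_add, Matrix.add_mul]
      map_smul' := fun r Z => by simp [Matrix.mul_smul, Matrix.smul_mul] }
  have hL := (L.toContinuousLinearMap.hasFDerivAt
      (x := (α • SL + Ss)⁻¹)).comp_hasDerivAt α (lem_inv_deriv SL Ss α hu)
  have heq : L.toContinuousLinearMap (-((α • SL + Ss)⁻¹ * SL * (α • SL + Ss)⁻¹)) =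
      -trace (C * (α • SL + Ss)⁻¹ * SL * (α • SL + Ss)⁻¹ * Aq) := by
    simp [L, Matrix.mul_assoc]
  replace hL := hL.congr_deriv heq
  simpa [Function.comp_def, L] using hL

private lemma lem_key {p n : ℕ} (SL Ss : Matrix (Fin p) (Fin p) ℝ)
    (V : Matrix (Fin n) (Fin n) ℝ) (Y M : Matrix (Fin p) (Fin n) ℝ)
    {β : ℝ} (hβ : 0 < β) (hdet : IsUnit (β • SL + Ss).det) :
    (SL + β⁻¹ • Ss).det ^ ((n : ℝ) / 2) / (SL + Ss).det ^ ((n : ℝ) / 2) *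
      Real.exp (-(1 / 2) * Matrix.trace
        (((β⁻¹ - 1) • ((SL + Ss)⁻¹ * Ss * (SL + β⁻¹ • Ss)⁻¹)) *
          (Y - M) * V⁻¹ * (Y - M)ᵀ))
    = (β⁻¹ ^ p * (β • SL + Ss).det) ^ ((n : ℝ) / 2) / (SL + Ss).det ^ ((n : ℝ) / 2) *
      Real.exp (-(1 / 2) * ((1 - β) *
        trace ((SL + Ss)⁻¹ * Ss * (β • SL + Ss)⁻¹ * ((Y - M) * V⁻¹ * (Y - M)ᵀ)))) := by
  have hβ' : β ≠ 0 := hβ.ne'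
  have h1 : SL + β⁻¹ • Ss = β⁻¹ • (β • SL + Ss) := by
    rw [smul_add, smul_smul, inv_mul_cancel₀ hβ', one_smul]
  have h2 : (SL + β⁻¹ • Ss)⁻¹ = β • (β • SL + Ss)⁻¹ := by
    haveI := invertibleOfNonzero (inv_ne_zero hβ')
    rw [h1, Matrix.inv_smul (k := β⁻¹) (h := hdet), invOf_eq_inv, inv_inv]
  have h3 : (SL + β⁻¹ • Ss).det = β⁻¹ ^ p * (β • SL + Ss).det := by
    rw [h1, det_smul]; simp
  rw [h3, h2]
  congr 2
  have hb : (β⁻¹ - 1) * β = 1 - β := by field_simp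
  rw [Matrix.mul_smul, smul_smul, hb, Matrix.smul_mul, Matrix.smul_mul, Matrix.smul_mul,
    trace_smul, smul_eq_mul]
  congr 2
  simp [Matrix.mul_assoc]


/-- The Bayes factor `H` is differentiable on `(0,1)` with derivative
`H′(α) = (H(α)/(2α)) tr(−n B̃(α)⁻¹Σ_* + α Υ(α) Ã + α(1−α) Υ(α) Σ_L B̃(α)⁻¹ Ã)`,
where `Ã = (Y − M_*)V⁻¹(Y − M_*)ᵀ`, `B̃(α) = αΣ_L + Σ_*`, and
`Υ(α) = (Σ_L + Σ_*)⁻¹ Σ_* B̃(α)⁻¹`. -/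
theorem bf_hasDerivAt
    (p n : ℕ) (hp : 0 < p) (hn : 0 < n)
    (SL Ss : Matrix (Fin p) (Fin p) ℝ) (hSL : SL.PosDef) (hSs : Ss.PosDef)
    (V : Matrix (Fin n) (Fin n) ℝ) (hV : V.PosDef)
    (Y M : Matrix (Fin p) (Fin n) ℝ)
    (α : ℝ) (hα : α ∈ Set.Ioo (0:ℝ) 1) :
    HasDerivAt
      (fun β : ℝ =>
        (SL + β⁻¹ • Ss).det ^ ((n : ℝ) / 2) / (SL + Ss).det ^ ((n : ℝ) / 2) *
          Real.exp (-(1 / 2) * Matrix.trace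
            (((β⁻¹ - 1) • ((SL + Ss)⁻¹ * Ss * (SL + β⁻¹ • Ss)⁻¹)) *
              (Y - M) * V⁻¹ * (Y - M)ᵀ)))
      (((SL + α⁻¹ • Ss).det ^ ((n : ℝ) / 2) / (SL + Ss).det ^ ((n : ℝ) / 2) *
          Real.exp (-(1 / 2) * Matrix.trace
            (((α⁻¹ - 1) • ((SL + Ss)⁻¹ * Ss * (SL + α⁻¹ • Ss)⁻¹)) *
              (Y - M) * V⁻¹ * (Y - M)ᵀ))) / (2 * α) *
        Matrix.trace
          ((-(n : ℝ)) • ((α • SL + Ss)⁻¹ * Ss) +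
            α • ((SL + Ss)⁻¹ * Ss * (α • SL + Ss)⁻¹ *
              ((Y - M) * V⁻¹ * (Y - M)ᵀ)) +
            (α * (1 - α)) • ((SL + Ss)⁻¹ * Ss * (α • SL + Ss)⁻¹ * SL *
              (α • SL + Ss)⁻¹ * ((Y - M) * V⁻¹ * (Y - M)ᵀ))))
      α := by
  obtain ⟨hα0, hα1⟩ := hα
  have hαne : α ≠ 0 := hα0.ne'
  have hBpos : ∀ β : ℝ, 0 < β → (β • SL + Ss).PosDef := fun β hβ => lem_posDef hSL hSs hβ
  have hdα : 0 < (α • SL + Ss).det := (hBpos α hα0).det_pos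
  have hdetα : IsUnit (α • SL + Ss).det := hdα.ne'.isUnit
  have huα : IsUnit (α • SL + Ss) := (Matrix.isUnit_iff_isUnit_det _).2 hdetα
  have hcpos : 0 < (SL + Ss).det ^ ((n : ℝ) / 2) :=
    Real.rpow_pos_of_pos (Matrix.PosDef.add hSL hSs).det_pos _
  -- derivative pieces
  have hd := lem_det_deriv SL Ss α hdetα
  have hs := lem_trace_deriv SL Ss ((SL + Ss)⁻¹ * Ss) ((Y - M) * V⁻¹ * (Y - M)ᵀ) α huα
  have he1 : HasDerivAt (fun β : ℝ => β⁻¹ ^ p)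
      ((p : ℝ) * α⁻¹ ^ (p - 1) * -(α ^ 2)⁻¹) α := (hasDerivAt_inv hαne).pow p
  have he := he1.mul hd
  have hepos : 0 < α⁻¹ ^ p * (α • SL + Ss).det :=
    mul_pos (pow_pos (inv_pos.2 hα0) p) hdα
  have hF1 := (he.rpow_const (p := (n : ℝ) / 2) (Or.inl hepos.ne')).div_const
    ((SL + Ss).det ^ ((n : ℝ) / 2))
  have hone : HasDerivAt (fun β : ℝ => 1 - β) (0 - 1) α :=
    (hasDerivAt_const α 1).sub (hasDerivAt_id α)
  have hG := ((hone.mul hs).const_mul (-(1 / 2) : ℝ)).exp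
  have hprod := hF1.mul hG
  have hmem : Set.Ioi (0 : ℝ) ∈ nhds α := Ioi_mem_nhds hα0
  have heq : (fun β : ℝ =>
        (SL + β⁻¹ • Ss).det ^ ((n : ℝ) / 2) / (SL + Ss).det ^ ((n : ℝ) / 2) *
          Real.exp (-(1 / 2) * Matrix.trace
            (((β⁻¹ - 1) • ((SL + Ss)⁻¹ * Ss * (SL + β⁻¹ • Ss)⁻¹)) *
              (Y - M) * V⁻¹ * (Y - M)ᵀ)))
      =ᶠ[nhds α] (fun β : ℝ =>
        (β⁻¹ ^ p * (β • SL + Ss).det) ^ ((n : ℝ) / 2) / (SL + Ss).det ^ ((n : ℝ) / 2) *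
          Real.exp (-(1 / 2) * ((1 - β) *
            trace ((SL + Ss)⁻¹ * Ss * (β • SL + Ss)⁻¹ * ((Y - M) * V⁻¹ * (Y - M)ᵀ))))) :=
    Filter.eventuallyEq_of_mem hmem fun β hβ =>
      lem_key SL Ss V Y M hβ ((hBpos β hβ).det_pos.ne'.isUnit)
  have hmain := hprod.congr_of_eventuallyEq heq
  refine hmain.congr_deriv ?_
  symm
  simp only [Pi.mul_apply]
  -- value equality
  rw [lem_key SL Ss V Y M hα0 hdetα]
  rw [trace_add, trace_add, trace_smul, trace_smul, trace_smul]
  -- trace relation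
  have hswap : α • ((α • SL + Ss)⁻¹ * SL) = 1 - (α • SL + Ss)⁻¹ * Ss := by
    calc α • ((α • SL + Ss)⁻¹ * SL) = (α • SL + Ss)⁻¹ * (α • SL) := (Matrix.mul_smul _ _ _).symm
      _ = (α • SL + Ss)⁻¹ * ((α • SL + Ss) - Ss) := by rw [add_sub_cancel_right]
      _ = 1 - (α • SL + Ss)⁻¹ * Ss := by
          rw [Matrix.mul_sub, Matrix.nonsing_inv_mul _ hdetα]
  have hrel : α * trace ((α • SL + Ss)⁻¹ * SL) =
      (p : ℝ) - trace ((α • SL + Ss)⁻¹ * Ss) := by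
    have h6 := congrArg trace hswap
    rwa [trace_smul, trace_sub, trace_one, smul_eq_mul, Fintype.card_fin] at h6
  set dA := (α • SL + Ss).det with hdA
  set b := trace ((α • SL + Ss)⁻¹ * SL) with hbdef
  set a := trace ((α • SL + Ss)⁻¹ * Ss) with hadef
  set sA := trace ((SL + Ss)⁻¹ * Ss * (α • SL + Ss)⁻¹ * ((Y - M) * V⁻¹ * (Y - M)ᵀ)) with hsA
  set tA := trace ((SL + Ss)⁻¹ * Ss * (α • SL + Ss)⁻¹ * SL * (α • SL + Ss)⁻¹ *
    ((Y - M) * V⁻¹ * (Y - M)ᵀ)) with htA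
  set c := (SL + Ss).det ^ ((n : ℝ) / 2) with hcdef
  have hb' : b = ((p : ℝ) - a) / α := by
    rw [eq_div_iff hαne]; linarith [hrel]
  rw [Real.rpow_sub_one hepos.ne']
  have hgp : α⁻¹ ^ p = α⁻¹ ^ (p - 1) * α⁻¹ := by
    rw [← pow_succ, Nat.sub_add_cancel hp]
  rw [hb', hgp]
  have hg : α⁻¹ ^ (p - 1) ≠ 0 := pow_ne_zero _ (inv_ne_zero hαne)
  have hdAne : dA ≠ 0 := hdα.ne'
  have hcne : c ≠ 0 := hcpos.ne'
  set K := (α⁻¹ ^ (p - 1) * α⁻¹ * dA) ^ ((n : ℝ) / 2) with hK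
  field_simp
  ring
end

section
/- For every real c > 0, ∫₀¹ sqrt((αc+1)/(α(c+1))) dα = 1 + (1/(2·sqrt(c(c+1))))·log((sqrt(c+1)+sqrt(c))/(sqrt(c+1)−sqrt(c))). -/
open MeasureTheory

/-- For every real `c > 0`,
`∫₀¹ √((αc+1)/(α(c+1))) dα = 1 + (1/(2√(c(c+1)))) log((√(c+1)+√c)/(√(c+1)−√c))`. -/
theorem integral_sqrt_ratio (c : ℝ) (hc : 0 < c) :
    (∫ α in Set.Ioo (0:ℝ) 1, Real.sqrt ((α * c + 1) / (α * (c + 1)))) =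
      1 + (1 / (2 * Real.sqrt (c * (c + 1)))) *
        Real.log ((Real.sqrt (c + 1) + Real.sqrt c) / (Real.sqrt (c + 1) - Real.sqrt c)) := by
  have hc1 : (0:ℝ) < c + 1 := by linarith
  set F : ℝ → ℝ := fun x =>
    (Real.sqrt (x * (x * c + 1)) + (1 / Real.sqrt c) * Real.arsinh (Real.sqrt (c * x)))
      / Real.sqrt (c + 1) with hF
  have hcont : ContinuousOn F (Set.Icc 0 1) := by
    apply ContinuousOn.div_const
    apply ContinuousOn.add
    · exact (Real.continuous_sqrt.comp (by continuity)).continuousOn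
    · exact (continuous_const.mul (Real.continuous_arsinh.comp
        (Real.continuous_sqrt.comp (continuous_const.mul continuous_id)))).continuousOn
  have hderiv : ∀ x ∈ Set.Ioo (0:ℝ) 1,
      HasDerivAt F (Real.sqrt ((x * c + 1) / (x * (c + 1)))) x := by
    intro x hx
    obtain ⟨hx0, hx1⟩ := hx
    have hxc1 : 0 < x * c + 1 := by positivity
    have hinner : x * (x * c + 1) ≠ 0 := by positivity
    have hcx : c * x ≠ 0 := by positivity
    have hg : HasDerivAt (fun y => Real.sqrt (y * (y * c + 1)))
        ((1 * (x * c + 1) + x * (1 * c)) / (2 * Real.sqrt (x * (x * c + 1)))) x := by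
      simpa using
        (((hasDerivAt_id x).mul (((hasDerivAt_id x).mul_const c).add_const 1))).sqrt hinner
    have hsq : HasDerivAt (fun y => Real.sqrt (c * y))
        ((c * 1) / (2 * Real.sqrt (c * x))) x :=
      ((hasDerivAt_id x).const_mul c).sqrt hcx
    have hh : HasDerivAt (fun y => Real.arsinh (Real.sqrt (c * y)))
        ((Real.sqrt (1 + (Real.sqrt (c * x)) ^ 2))⁻¹ * ((c * 1) / (2 * Real.sqrt (c * x)))) x :=
      (Real.hasDerivAt_arsinh _).comp x hsq
    have hD : HasDerivAt F
        (((1 * (x * c + 1) + x * (1 * c)) / (2 * Real.sqrt (x * (x * c + 1)))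
          + (1 / Real.sqrt c) * ((Real.sqrt (1 + (Real.sqrt (c * x)) ^ 2))⁻¹
              * ((c * 1) / (2 * Real.sqrt (c * x)))))
          / Real.sqrt (c + 1)) x :=
      (hg.add (hh.const_mul _)).div_const _
    convert hD using 1
    have h1 : (Real.sqrt (c * x)) ^ 2 = c * x := Real.sq_sqrt (by positivity)
    rw [h1]
    have e1 : Real.sqrt (x * (x * c + 1)) = Real.sqrt x * Real.sqrt (x * c + 1) :=
      Real.sqrt_mul hx0.le _
    have e2 : Real.sqrt (c * x) = Real.sqrt c * Real.sqrt x := Real.sqrt_mul hc.le _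
    have e3 : Real.sqrt (1 + c * x) = Real.sqrt (x * c + 1) := by ring_nf
    have e4 : Real.sqrt ((x * c + 1) / (x * (c + 1)))
        = Real.sqrt (x * c + 1) / (Real.sqrt x * Real.sqrt (c + 1)) := by
      rw [Real.sqrt_div' _ (by positivity), Real.sqrt_mul hx0.le]
    rw [e1, e2, e3, e4]
    have sx : (0:ℝ) < Real.sqrt x := Real.sqrt_pos.2 hx0
    have sc : (0:ℝ) < Real.sqrt c := Real.sqrt_pos.2 hc
    have sb : (0:ℝ) < Real.sqrt (x * c + 1) := Real.sqrt_pos.2 hxc1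
    have sd : (0:ℝ) < Real.sqrt (c + 1) := Real.sqrt_pos.2 hc1
    have hx' : Real.sqrt x ^ 2 = x := Real.sq_sqrt hx0.le
    have hc' : Real.sqrt c ^ 2 = c := Real.sq_sqrt hc.le
    have hb' : Real.sqrt (x * c + 1) ^ 2 = x * c + 1 := Real.sq_sqrt (by positivity)
    have hb2 : Real.sqrt (1 + x * c) ^ 2 = 1 + x * c := Real.sq_sqrt (by positivity)
    field_simp
    ring_nf
    linear_combination (2 * Real.sqrt c ^ 2) * hb2 + hc'
  have hint : IntervalIntegrable (fun α => Real.sqrt ((α * c + 1) / (α * (c + 1)))) volume 0 1 := by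
    have hg : IntervalIntegrable (fun α : ℝ => α ^ (-(1:ℝ)/2)) volume 0 1 :=
      intervalIntegral.intervalIntegrable_rpow' (by norm_num)
    apply hg.mono_fun
    · apply Measurable.aestronglyMeasurable
      exact Real.continuous_sqrt.measurable.comp
        (((measurable_id.mul_const c).add_const 1).div (measurable_id.mul_const (c+1)))
    · rw [Filter.EventuallyLE, ae_restrict_iff' measurableSet_uIoc]
      filter_upwards with x hx
      rw [Set.uIoc_of_le (by norm_num : (0:ℝ) ≤ 1)] at hx
      obtain ⟨hx0, hx1⟩ := hx
      have h1 : (x * c + 1) / (x * (c + 1)) ≤ 1 / x := by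
        rw [div_le_div_iff₀ (by positivity) hx0]
        nlinarith [mul_le_of_le_one_right (mul_nonneg hx0.le hc.le) hx1]
      have h2 : Real.sqrt ((x * c + 1) / (x * (c + 1))) ≤ x ^ (-(1:ℝ)/2) := by
        calc Real.sqrt ((x * c + 1) / (x * (c + 1))) ≤ Real.sqrt (1 / x) :=
              Real.sqrt_le_sqrt h1
          _ = x ^ (-(1:ℝ)/2) := by
              rw [one_div, Real.sqrt_inv, Real.sqrt_eq_rpow, ← Real.rpow_neg hx0.le]
              norm_num
      have h3 : (0:ℝ) ≤ x ^ (-(1:ℝ)/2) := Real.rpow_nonneg hx0.le _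
      simp only [Real.norm_eq_abs, abs_of_nonneg (Real.sqrt_nonneg _), abs_of_nonneg h3]
      exact h2
  have key := intervalIntegral.integral_eq_sub_of_hasDerivAt_of_le (by norm_num)
    hcont hderiv hint
  have hIoo : (∫ α in Set.Ioo (0:ℝ) 1, Real.sqrt ((α * c + 1) / (α * (c + 1))))
      = ∫ α in (0:ℝ)..1, Real.sqrt ((α * c + 1) / (α * (c + 1))) := by
    rw [intervalIntegral.integral_of_le (by norm_num), ← integral_Ioc_eq_integral_Ioo]
  rw [hIoo, key]
  have hF0 : F 0 = 0 := by simp [hF]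
  have sc : (0:ℝ) < Real.sqrt c := Real.sqrt_pos.2 hc
  have sd : (0:ℝ) < Real.sqrt (c + 1) := Real.sqrt_pos.2 hc1
  have hc' : Real.sqrt c ^ 2 = c := Real.sq_sqrt hc.le
  have hd' : Real.sqrt (c + 1) ^ 2 = c + 1 := Real.sq_sqrt hc1.le
  have hlt : Real.sqrt c < Real.sqrt (c + 1) := by
    apply Real.sqrt_lt_sqrt hc.le; linarith
  have hF1 : F 1 = 1 + (1 / (2 * Real.sqrt (c * (c + 1)))) *
      Real.log ((Real.sqrt (c + 1) + Real.sqrt c) / (Real.sqrt (c + 1) - Real.sqrt c)) := by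
    have e1 : (1:ℝ) * (1 * c + 1) = c + 1 := by ring
    have e2 : c * 1 = c := by ring
    have e3 : Real.arsinh (Real.sqrt c) = Real.log (Real.sqrt c + Real.sqrt (c + 1)) := by
      rw [Real.arsinh, hc', add_comm (1:ℝ) c]
    have e4 : (Real.sqrt (c + 1) + Real.sqrt c) / (Real.sqrt (c + 1) - Real.sqrt c)
        = (Real.sqrt (c + 1) + Real.sqrt c) ^ 2 := by
      rw [div_eq_iff (by nlinarith)]
      nlinarith
    have e5 : Real.log ((Real.sqrt (c + 1) + Real.sqrt c) ^ 2)
        = 2 * Real.log (Real.sqrt c + Real.sqrt (c + 1)) := by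
      rw [Real.log_pow]; push_cast; rw [add_comm (Real.sqrt (c+1))]
    have e6 : Real.sqrt (c * (c + 1)) = Real.sqrt c * Real.sqrt (c + 1) :=
      Real.sqrt_mul hc.le _
    rw [hF]
    simp only [e1, e2, e3, e4, e5, e6]
    field_simp
  rw [hF0, hF1]; ring
end

section
/- The integrated Bayes factor satisfies ∫₀¹ H(α) dα − 1 ≤ (1/(2·sqrt((φ+t−1)(φ+t))))·log((sqrt(φ+t)+sqrt(φ+t−1))/(sqrt(φ+t)−sqrt(φ+t−1))). -/
open MeasureTheory

open Real


lemma alg_key (c x u v s w : ℝ) (hu : 0 < u) (hv : 0 < v) (hs : 0 < s) (hw : 0 < w)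
    (h1 : u ^ 2 = x) (h3 : s ^ 2 = c) (h2 : v ^ 2 = c * x + 1) :
    v / (u * w) = (2 * c * x + 1) / (2 * (u * v)) / w +
      1 / (w * s) * ((c / (2 * (s * u)) + c / (2 * v)) / (s * u + v)) := by
  subst h1 h3
  have hsu : 0 < s * u + v := by positivity
  field_simp
  linear_combination (2 * (u * s + v)) * h2

noncomputable def Fanti (c x : ℝ) : ℝ :=
  Real.sqrt (x * (c * x + 1)) / Real.sqrt (c + 1) +
    (1 / Real.sqrt ((c + 1) * c)) * Real.log (Real.sqrt (c * x) + Real.sqrt (c * x + 1))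

lemma Fanti_hasDerivAt (c : ℝ) (hc : 0 < c) {x : ℝ} (hx : x ∈ Set.Ioo (0:ℝ) 1) :
    HasDerivAt (Fanti c) (((x * c + 1) / (x * (c + 1))) ^ ((1:ℝ)/2)) x := by
  obtain ⟨hx0, hx1⟩ := hx
  have hcx : 0 < c * x := by positivity
  have hcx1 : 0 < c * x + 1 := by positivity
  have hxcx : 0 < x * (c * x + 1) := by positivity
  have hc1 : 0 < c + 1 := by linarith
  have h1 : HasDerivAt (fun y : ℝ => Real.sqrt (y * (c * y + 1)) / Real.sqrt (c + 1))
      ((2 * c * x + 1) / (2 * Real.sqrt (x * (c * x + 1))) / Real.sqrt (c + 1)) x := by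
    have hp : HasDerivAt (fun y : ℝ => y * (c * y + 1)) (2 * c * x + 1) x := by
      have := (hasDerivAt_id' x).mul (((hasDerivAt_id' x).const_mul c).add_const 1)
      convert this using 1; rfl; rfl; rfl; ring
    exact (hp.sqrt hxcx.ne').div_const _
  have h2 : HasDerivAt (fun y : ℝ => (1 / Real.sqrt ((c + 1) * c)) *
        Real.log (Real.sqrt (c * y) + Real.sqrt (c * y + 1)))
      ((1 / Real.sqrt ((c + 1) * c)) *
        ((c / (2 * Real.sqrt (c * x)) + c / (2 * Real.sqrt (c * x + 1))) /
          (Real.sqrt (c * x) + Real.sqrt (c * x + 1)))) x := by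
    have ha : HasDerivAt (fun y : ℝ => Real.sqrt (c * y)) (c / (2 * Real.sqrt (c * x))) x := by
      have := ((hasDerivAt_id' x).const_mul c).sqrt hcx.ne'
      simpa using this
    have hb : HasDerivAt (fun y : ℝ => Real.sqrt (c * y + 1))
        (c / (2 * Real.sqrt (c * x + 1))) x := by
      have := (((hasDerivAt_id' x).const_mul c).add_const 1).sqrt hcx1.ne'
      simpa using this
    have hne : Real.sqrt (c * x) + Real.sqrt (c * x + 1) ≠ 0 := by positivity
    exact ((ha.add hb).log hne).const_mul _
  have hsum := h1.add h2
  convert hsum using 1; rfl; rfl; rfl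
  have su : (0:ℝ) < Real.sqrt x := Real.sqrt_pos.2 hx0
  have sv : (0:ℝ) < Real.sqrt (c * x + 1) := Real.sqrt_pos.2 hcx1
  have ss : (0:ℝ) < Real.sqrt c := Real.sqrt_pos.2 hc
  have sw : (0:ℝ) < Real.sqrt (c + 1) := Real.sqrt_pos.2 hc1
  have e1 : Real.sqrt (x * (c * x + 1)) = Real.sqrt x * Real.sqrt (c * x + 1) :=
    Real.sqrt_mul hx0.le _
  have e2 : Real.sqrt (c * x) = Real.sqrt c * Real.sqrt x := Real.sqrt_mul hc.le _
  have e3 : Real.sqrt ((c + 1) * c) = Real.sqrt (c + 1) * Real.sqrt c := Real.sqrt_mul hc1.le _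
  have e4 : ((x * c + 1) / (x * (c + 1))) ^ ((1:ℝ)/2)
      = Real.sqrt (c * x + 1) / (Real.sqrt x * Real.sqrt (c + 1)) := by
    rw [← Real.sqrt_eq_rpow, Real.sqrt_div (by positivity), Real.sqrt_mul hx0.le, mul_comm x c]
  rw [e4, e1, e2, e3]
  exact alg_key c x _ _ _ _ su sv ss sw (Real.sq_sqrt hx0.le) (Real.sq_sqrt hc.le)
    (Real.sq_sqrt hcx1.le)

open MeasureTheory

lemma kap_integrable (c : ℝ) (hc : 0 < c) :
    IntervalIntegrable (fun x : ℝ => ((x * c + 1) / (x * (c + 1))) ^ ((1:ℝ)/2))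
      volume 0 1 := by
  have hg : IntervalIntegrable (fun x : ℝ => x ^ (-(1:ℝ)/2)) volume 0 1 :=
    intervalIntegral.intervalIntegrable_rpow' (by norm_num)
  apply hg.mono_fun
  · apply Measurable.aestronglyMeasurable
    fun_prop
  · have h01 : Set.uIoc (0:ℝ) 1 = Set.Ioc 0 1 := by
      rw [Set.uIoc_of_le]; norm_num
    rw [Filter.EventuallyLE, ae_restrict_iff' measurableSet_uIoc]
    filter_upwards with x hx
    rw [h01] at hx
    obtain ⟨hx0, hx1⟩ := hx
    have hb : (0:ℝ) ≤ (x * c + 1) / (x * (c + 1)) := by positivity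
    have hxx : (0:ℝ) ≤ x ^ (-(1:ℝ)/2) := Real.rpow_nonneg hx0.le _
    rw [Real.norm_of_nonneg (Real.rpow_nonneg hb _), Real.norm_of_nonneg hxx]
    have : x ^ (-(1:ℝ)/2) = (x⁻¹) ^ ((1:ℝ)/2) := by
      rw [Real.inv_rpow hx0.le, ← Real.rpow_neg hx0.le]
      norm_num
    rw [this]
    apply Real.rpow_le_rpow hb _ (by norm_num)
    rw [div_le_iff₀ (by positivity)]
    have : x⁻¹ * (x * (c + 1)) = c + 1 := by field_simp
    rw [this]
    nlinarith

lemma Fanti_continuousOn (c : ℝ) (hc : 0 < c) : ContinuousOn (Fanti c) (Set.Icc 0 1) := by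
  apply ContinuousOn.add
  · exact ((Continuous.sqrt (by continuity)).div_const _).continuousOn
  · apply ContinuousOn.mul continuousOn_const
    apply ContinuousOn.log
    · exact (Continuous.add (by continuity) (by continuity)).continuousOn
    · intro x hx
      have h1 : (0:ℝ) ≤ c * x := by
        have := hx.1; positivity
      positivity

lemma Fanti_zero (c : ℝ) : Fanti c 0 = 0 := by
  simp [Fanti]

lemma Fanti_one (c : ℝ) (hc : 0 < c) :
    Fanti c 1 = 1 + (1 / Real.sqrt ((c + 1) * c)) *
      Real.log (Real.sqrt c + Real.sqrt (c + 1)) := by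
  have h1 : (1:ℝ) * (c * 1 + 1) = c + 1 := by ring
  have h2 : c * (1:ℝ) = c := by ring
  have h3 : c * (1:ℝ) + 1 = c + 1 := by ring
  have hsw : Real.sqrt (c + 1) ≠ 0 := by positivity
  rw [Fanti, h1, h3, h2, div_self hsw]

lemma kap_integral (c : ℝ) (hc : 0 < c) :
    ∫ x in (0:ℝ)..1, ((x * c + 1) / (x * (c + 1))) ^ ((1:ℝ)/2) =
      1 + (1 / Real.sqrt ((c + 1) * c)) * Real.log (Real.sqrt c + Real.sqrt (c + 1)) := by
  rw [intervalIntegral.integral_eq_sub_of_hasDeriv_right_of_le zero_le_one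
    (Fanti_continuousOn c hc)
    (fun x hx => (Fanti_hasDerivAt c hc hx).hasDerivWithinAt)
    (kap_integrable c hc), Fanti_one c hc, Fanti_zero]
  ring

lemma rhs_eq (c : ℝ) (hc : 0 < c) :
    (1 / (2 * Real.sqrt (c * (c + 1)))) *
        Real.log ((Real.sqrt (c + 1) + Real.sqrt c) / (Real.sqrt (c + 1) - Real.sqrt c)) =
      (1 / Real.sqrt ((c + 1) * c)) * Real.log (Real.sqrt c + Real.sqrt (c + 1)) := by
  have hlt : Real.sqrt c < Real.sqrt (c + 1) := Real.sqrt_lt_sqrt hc.le (lt_add_one c)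
  have hs2 : Real.sqrt c ^ 2 = c := Real.sq_sqrt hc.le
  have hw2 : Real.sqrt (c + 1) ^ 2 = c + 1 := Real.sq_sqrt (by linarith)
  have hpos : 0 < Real.sqrt c + Real.sqrt (c + 1) := by positivity
  have hne : Real.sqrt (c + 1) - Real.sqrt c ≠ 0 := by linarith
  have key : (Real.sqrt (c + 1) + Real.sqrt c) / (Real.sqrt (c + 1) - Real.sqrt c) =
      (Real.sqrt c + Real.sqrt (c + 1)) ^ 2 := by
    rw [div_eq_iff hne]; nlinarith
  rw [key, Real.log_pow, mul_comm c (c + 1)]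
  push_cast
  ring

/-- The integrated Bayes factor satisfies
`∫₀¹ H(α) dα − 1 ≤ (1/(2√((φ+t−1)(φ+t)))) log((√(φ+t)+√(φ+t−1))/(√(φ+t)−√(φ+t−1)))`. -/
theorem integrated_bf_bound
    (σ φ t m y : ℝ) (hσ : 0 < σ) (hφ : 0 < φ) (ht : 1 < t) :
    (∫ α in Set.Ioo (0:ℝ) 1,
        ((α * (φ + t - 1) + 1) / (α * (φ + t))) ^ ((1:ℝ) / 2) *
          Real.exp ((y - m) ^ 2 /
            (2 * σ ^ 2 * (φ + t) * (α * (φ + t - 1) + 1) / ((α - 1) * (φ + t - 1))))) - 1 ≤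
      (1 / (2 * Real.sqrt ((φ + t - 1) * (φ + t)))) *
        Real.log ((Real.sqrt (φ + t) + Real.sqrt (φ + t - 1)) /
          (Real.sqrt (φ + t) - Real.sqrt (φ + t - 1))) := by
  set c : ℝ := φ + t - 1 with hcdef
  have hc : 0 < c := by rw [hcdef]; linarith
  have hb : φ + t = c + 1 := by rw [hcdef]; ring
  rw [hb]
  set κ : ℝ → ℝ := fun α => ((α * c + 1) / (α * (c + 1))) ^ ((1:ℝ)/2) with hκ
  set H : ℝ → ℝ := fun α => κ α *
    Real.exp ((y - m) ^ 2 / (2 * σ ^ 2 * (c + 1) * (α * c + 1) / ((α - 1) * c))) with hH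
  have hκIoc : IntegrableOn κ (Set.Ioc 0 1) volume := by
    have := kap_integrable c hc
    rwa [intervalIntegrable_iff_integrableOn_Ioc_of_le zero_le_one] at this
  have hκIoo : IntegrableOn κ (Set.Ioo 0 1) volume :=
    hκIoc.mono_set Set.Ioo_subset_Ioc_self
  have hle : ∀ α ∈ Set.Ioo (0:ℝ) 1, H α ≤ κ α := by
    intro α hα
    obtain ⟨h0, h1⟩ := hα
    have hκnn : 0 ≤ κ α := by
      rw [hκ]; positivity
    have hdenneg : (α - 1) * c < 0 := mul_neg_of_neg_of_pos (by linarith) hc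
    have hnum : 0 < 2 * σ ^ 2 * (c + 1) * (α * c + 1) := by positivity
    have hDneg : 2 * σ ^ 2 * (c + 1) * (α * c + 1) / ((α - 1) * c) < 0 :=
      div_neg_of_pos_of_neg hnum hdenneg
    have harg : (y - m) ^ 2 / (2 * σ ^ 2 * (c + 1) * (α * c + 1) / ((α - 1) * c)) ≤ 0 :=
      div_nonpos_of_nonneg_of_nonpos (sq_nonneg _) hDneg.le
    have hexp : Real.exp ((y - m) ^ 2 /
        (2 * σ ^ 2 * (c + 1) * (α * c + 1) / ((α - 1) * c))) ≤ 1 :=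
      Real.exp_le_one_iff.2 harg
    calc H α ≤ κ α * 1 := by
          apply mul_le_mul_of_nonneg_left hexp hκnn
      _ = κ α := mul_one _
  have hHnn : ∀ α ∈ Set.Ioo (0:ℝ) 1, 0 ≤ H α := by
    intro α hα
    obtain ⟨h0, h1⟩ := hα
    have hκnn : 0 ≤ κ α := by rw [hκ]; positivity
    exact mul_nonneg hκnn (Real.exp_pos _).le
  have hHmeas : AEStronglyMeasurable H (volume.restrict (Set.Ioo (0:ℝ) 1)) := by
    apply Measurable.aestronglyMeasurable
    rw [hH, hκ]
    fun_prop
  have hHint : IntegrableOn H (Set.Ioo 0 1) volume := by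
    apply Integrable.mono' hκIoo hHmeas
    rw [ae_restrict_iff' measurableSet_Ioo]
    filter_upwards with α hα
    rw [Real.norm_of_nonneg (hHnn α hα)]
    exact hle α hα
  have hmono : ∫ α in Set.Ioo (0:ℝ) 1, H α ≤ ∫ α in Set.Ioo (0:ℝ) 1, κ α :=
    setIntegral_mono_on hHint hκIoo measurableSet_Ioo hle
  have hκval : ∫ α in Set.Ioo (0:ℝ) 1, κ α =
      1 + (1 / Real.sqrt ((c + 1) * c)) * Real.log (Real.sqrt c + Real.sqrt (c + 1)) := by
    rw [← MeasureTheory.integral_Ioc_eq_integral_Ioo,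
      ← intervalIntegral.integral_of_le zero_le_one]
    exact kap_integral c hc
  rw [rhs_eq c hc]
  have : (∫ α in Set.Ioo (0:ℝ) 1, H α) ≤
      1 + (1 / Real.sqrt ((c + 1) * c)) * Real.log (Real.sqrt c + Real.sqrt (c + 1)) := by
    rw [← hκval]; exact hmono
  linarith
end

section
/- If a > np/2 and b > 0, then the integrated Bayes factor ∫₀¹ H(α)·(1/B(a,b))·α^(a−1)(1−α)^(b−1) dα is finite, where B(a,b) is the Euler Beta function and the weight is the Beta(a,b) density on (0,1). -/
open Matrix MeasureTheory

lemma smul_add_posDef' {m : ℕ} {S T : Matrix (Fin m) (Fin m) ℝ}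
    (hS : S.PosDef) (hT : T.PosDef) {t : ℝ} (ht : 0 ≤ t) : (t • S + T).PosDef := by
  refine Matrix.PosDef.posSemidef_add ⟨?_, ?_⟩ hT
  · show (t • S)ᴴ = t • S
    rw [Matrix.conjTranspose_smul, star_trivial, hS.1]
  · intro x
    have h := smul_nonneg ht (hS.posSemidef.2 x)
    rw [smul_eq_mul, Finsupp.mul_sum] at h
    convert h using 1
    refine Finsupp.sum_congr fun i _ => ?_
    rw [Finsupp.mul_sum]
    refine Finsupp.sum_congr fun j _ => ?_
    simp only [Matrix.smul_apply, smul_eq_mul, star_trivial]; ring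

lemma beta_integrable' {u v : ℝ} (hu : 0 < u) (hv : 0 < v) :
    IntegrableOn (fun x : ℝ => x ^ (u - 1) * (1 - x) ^ (v - 1)) (Set.Ioo (0:ℝ) 1) := by
  have h := Complex.betaIntegral_convergent (u := (u:ℂ)) (v := (v:ℂ)) (by simpa) (by simpa)
  rw [intervalIntegrable_iff, Set.uIoc_of_le zero_le_one] at h
  have h2 := (h.mono_set Set.Ioo_subset_Ioc_self).norm
  refine IntegrableOn.congr_fun h2 (fun x hx => ?_) measurableSet_Ioo
  have hx1 : (0:ℝ) < 1 - x := by linarith [hx.2]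
  have h1 : ((1:ℂ) - (x:ℂ)) = ((1 - x : ℝ) : ℂ) := by push_cast; ring
  rw [norm_mul, h1,
    Complex.norm_cpow_eq_rpow_re_of_pos hx.1, Complex.norm_cpow_eq_rpow_re_of_pos hx1]
  simp

lemma key_ident {p : ℕ} (SL Ss : Matrix (Fin p) (Fin p) ℝ) (hSL : SL.PosDef) (hSs : Ss.PosDef)
    {α : ℝ} (h0 : 0 < α) :
    (α⁻¹ - 1) • ((SL + Ss)⁻¹ * Ss * (SL + α⁻¹ • Ss)⁻¹)
      = (SL + Ss)⁻¹ - α • (α • SL + Ss)⁻¹ := by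
  have hA : (SL + Ss).PosDef := hSL.add hSs
  have hB : (SL + α⁻¹ • Ss).PosDef := by
    have := smul_add_posDef' hSs hSL (inv_pos.mpr h0).le
    rwa [add_comm] at this
  have hAd : IsUnit (SL + Ss).det := isUnit_iff_ne_zero.mpr hA.det_pos.ne'
  have hBd : IsUnit (SL + α⁻¹ • Ss).det := isUnit_iff_ne_zero.mpr hB.det_pos.ne'
  have hBinv : (SL + α⁻¹ • Ss)⁻¹ = α • (α • SL + Ss)⁻¹ := by
    have hKB : α • SL + Ss = α • (SL + α⁻¹ • Ss) := by
      rw [smul_add, smul_smul, mul_inv_cancel₀ h0.ne', one_smul]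
    rw [hKB]
    haveI := invertibleOfNonzero h0.ne'
    rw [Matrix.inv_smul _ α hBd, invOf_eq_inv, smul_smul, mul_inv_cancel₀ h0.ne', one_smul]
  rw [← hBinv]
  have hBA : (SL + α⁻¹ • Ss) - (SL + Ss) = (α⁻¹ - 1) • Ss := by
    rw [sub_smul, one_smul]; abel
  calc (α⁻¹ - 1) • ((SL + Ss)⁻¹ * Ss * (SL + α⁻¹ • Ss)⁻¹)
      = (SL + Ss)⁻¹ * ((α⁻¹ - 1) • Ss) * (SL + α⁻¹ • Ss)⁻¹ := by
        rw [Matrix.mul_smul, Matrix.smul_mul]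
    _ = (SL + Ss)⁻¹ * ((SL + α⁻¹ • Ss) - (SL + Ss)) * (SL + α⁻¹ • Ss)⁻¹ := by rw [hBA]
    _ = (SL + Ss)⁻¹ * ((SL + α⁻¹ • Ss) * (SL + α⁻¹ • Ss)⁻¹)
        - ((SL + Ss)⁻¹ * (SL + Ss)) * (SL + α⁻¹ • Ss)⁻¹ := by
        rw [Matrix.mul_sub, Matrix.sub_mul, Matrix.mul_assoc]
    _ = (SL + Ss)⁻¹ - (SL + α⁻¹ • Ss)⁻¹ := by
        rw [Matrix.mul_nonsing_inv _ hBd, Matrix.nonsing_inv_mul _ hAd, mul_one, one_mul]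


/-- If `a > np/2` and `b > 0`, then the integrated Bayes factor
`∫₀¹ H(α) (1/B(a,b)) α^(a−1)(1−α)^(b−1) dα` is finite (the integrand is integrable
on `(0,1)`), where `B(a,b)` is the Euler Beta function. -/
theorem integrated_bf_integrable
    (p n : ℕ) (hp : 0 < p) (hn : 0 < n)
    (SL Ss : Matrix (Fin p) (Fin p) ℝ) (hSL : SL.PosDef) (hSs : Ss.PosDef)
    (V : Matrix (Fin n) (Fin n) ℝ) (hV : V.PosDef)
    (Y M : Matrix (Fin p) (Fin n) ℝ)
    (a b : ℝ) (ha : (n : ℝ) * p / 2 < a) (hb : 0 < b) :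
    IntegrableOn
      (fun α : ℝ =>
        ((SL + α⁻¹ • Ss).det ^ ((n : ℝ) / 2) / (SL + Ss).det ^ ((n : ℝ) / 2) *
            Real.exp (-(1 / 2) * Matrix.trace
              (((α⁻¹ - 1) • ((SL + Ss)⁻¹ * Ss * (SL + α⁻¹ • Ss)⁻¹)) *
                (Y - M) * V⁻¹ * (Y - M)ᵀ))) *
          ((1 / ∫ x in Set.Ioo (0:ℝ) 1, x ^ (a - 1) * (1 - x) ^ (b - 1)) *
            α ^ (a - 1) * (1 - α) ^ (b - 1)))
      (Set.Ioo (0:ℝ) 1) := by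
  set c0 : ℝ := 1 / ∫ x in Set.Ioo (0:ℝ) 1, x ^ (a - 1) * (1 - x) ^ (b - 1) with hc0
  have hA : (SL + Ss).PosDef := hSL.add hSs
  have hdA : (0:ℝ) < (SL + Ss).det ^ ((n:ℝ)/2) := Real.rpow_pos_of_pos hA.det_pos _
  -- positivity of the family t • SL + Ss on [0,1]
  have hKpos : ∀ t ∈ Set.Icc (0:ℝ) 1, (t • SL + Ss).PosDef :=
    fun t ht => smul_add_posDef' hSL hSs ht.1
  -- continuity facts
  have hKcont : Continuous fun t : ℝ => t • SL + Ss :=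
    (continuous_id.smul continuous_const).add continuous_const
  -- Φ : bound for the determinant part
  have hΦcont : Continuous fun t : ℝ => ((t • SL + Ss).det) ^ ((n:ℝ)/2) :=
    hKcont.matrix_det.rpow_const (fun x => Or.inr (by positivity))
  obtain ⟨D, hD⟩ := isCompact_Icc.exists_bound_of_continuousOn
    (s := Set.Icc (0:ℝ) 1) hΦcont.continuousOn
  -- Ψ : bound for the exponential part
  have hexpcont : Continuous fun X : Matrix (Fin p) (Fin p) ℝ =>
      Real.exp (-(1 / 2) * Matrix.trace (X * (Y - M) * V⁻¹ * (Y - M)ᵀ)) :=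
    Real.continuous_exp.comp (continuous_const.mul
      (((continuous_id.matrix_mul continuous_const).matrix_mul
        continuous_const).matrix_mul continuous_const).matrix_trace)
  have hinvcont : ContinuousOn (fun t : ℝ => (t • SL + Ss)⁻¹) (Set.Icc 0 1) := by
    have hrw : (fun t : ℝ => (t • SL + Ss)⁻¹)
        = fun t => ((t • SL + Ss).det)⁻¹ • (t • SL + Ss).adjugate := by
      funext t; rw [Matrix.inv_def, Ring.inverse_eq_inv]
    rw [hrw]
    exact (hKcont.matrix_det.continuousOn.inv₀
        (fun t ht => (hKpos t ht).det_pos.ne')).smul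
      hKcont.matrix_adjugate.continuousOn
  have hΨcont : ContinuousOn (fun t : ℝ =>
      Real.exp (-(1 / 2) * Matrix.trace
        (((SL + Ss)⁻¹ - t • (t • SL + Ss)⁻¹) * (Y - M) * V⁻¹ * (Y - M)ᵀ)))
      (Set.Icc 0 1) :=
    hexpcont.comp_continuousOn
      (continuousOn_const.sub (continuousOn_id.smul hinvcont))
  obtain ⟨E, hE⟩ := isCompact_Icc.exists_bound_of_continuousOn
    (s := Set.Icc (0:ℝ) 1) hΨcont
  -- the dominating function
  set K : ℝ := D * E * |c0| / (SL + Ss).det ^ ((n:ℝ)/2) with hK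
  have hu : 0 < a - (n : ℝ) * p / 2 := by linarith
  have hbeta := beta_integrable' hu hb
  have hG : IntegrableOn
      (fun x : ℝ => K * (x ^ (a - (n : ℝ) * p / 2 - 1) * (1 - x) ^ (b - 1)))
      (Set.Ioo (0:ℝ) 1) := hbeta.const_mul K
  refine Integrable.mono' hG ?_ ?_
  · -- measurability of the integrand via continuity on Ioo
    have hinv' : ContinuousOn (fun α : ℝ => α⁻¹) (Set.Ioo (0:ℝ) 1) :=
      continuousOn_id.inv₀ fun x hx => hx.1.ne'
    have hBm : ContinuousOn (fun α : ℝ => SL + α⁻¹ • Ss) (Set.Ioo (0:ℝ) 1) :=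
      continuousOn_const.add (hinv'.smul continuousOn_const)
    have hBpos : ∀ α ∈ Set.Ioo (0:ℝ) 1, (SL + α⁻¹ • Ss).PosDef := by
      intro α hα
      have := smul_add_posDef' hSs hSL (inv_pos.mpr hα.1).le
      rwa [add_comm] at this
    have hdet : ContinuousOn (fun α : ℝ => (SL + α⁻¹ • Ss).det) (Set.Ioo (0:ℝ) 1) :=
      continuous_id.matrix_det.comp_continuousOn hBm
    have hd1 : ContinuousOn (fun α : ℝ => (SL + α⁻¹ • Ss).det ^ ((n:ℝ)/2))
        (Set.Ioo (0:ℝ) 1) := hdet.rpow_const (fun x _ => Or.inr (by positivity))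
    have hBinvc : ContinuousOn (fun α : ℝ => (SL + α⁻¹ • Ss)⁻¹) (Set.Ioo (0:ℝ) 1) := by
      have hrw : (fun α : ℝ => (SL + α⁻¹ • Ss)⁻¹)
          = fun α => ((SL + α⁻¹ • Ss).det)⁻¹ • (SL + α⁻¹ • Ss).adjugate := by
        funext α; rw [Matrix.inv_def, Ring.inverse_eq_inv]
      rw [hrw]
      exact (hdet.inv₀ (fun α hα => (hBpos α hα).det_pos.ne')).smul
        ((continuous_id.matrix_adjugate).comp_continuousOn hBm)
    have hSm : ContinuousOn
        (fun α : ℝ => (α⁻¹ - 1) • ((SL + Ss)⁻¹ * Ss * (SL + α⁻¹ • Ss)⁻¹))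
        (Set.Ioo (0:ℝ) 1) :=
      (hinv'.sub continuousOn_const).smul
        ((continuous_const.matrix_mul continuous_id).comp_continuousOn hBinvc)
    apply ContinuousOn.aestronglyMeasurable ?_ measurableSet_Ioo
    exact (((hd1.div_const _).mul (hexpcont.comp_continuousOn hSm)).mul
        (((continuousOn_const.mul (continuousOn_id.rpow_const
            (fun x hx => Or.inl hx.1.ne'))).mul
          (((continuousOn_const (c := (1:ℝ))).sub continuousOn_id).rpow_const
            (fun x hx => Or.inl (by
              have h2 := hx.2
              show (1:ℝ) - id x ≠ 0
              simp only [id]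
              intro h; linarith [sub_eq_zero.mp h]))))))
  · -- the pointwise bound
    rw [ae_restrict_iff' measurableSet_Ioo]
    refine Filter.Eventually.of_forall (fun α hα => ?_)
    obtain ⟨hα0, hα1⟩ := hα
    have hαIcc : α ∈ Set.Icc (0:ℝ) 1 := ⟨hα0.le, hα1.le⟩
    have hB : (SL + α⁻¹ • Ss).PosDef := by
      have := smul_add_posDef' hSs hSL (inv_pos.mpr hα0).le
      rwa [add_comm] at this
    have hKα : (α • SL + Ss).PosDef := hKpos α hαIcc
    -- rewrite the exponential via the key identity
    rw [key_ident SL Ss hSL hSs hα0]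
    -- determinant decomposition
    have hdet_eq : (SL + α⁻¹ • Ss).det ^ ((n:ℝ)/2)
        = α ^ (-((n:ℝ) * p / 2)) * ((α • SL + Ss).det ^ ((n:ℝ)/2)) := by
      have h1 : SL + α⁻¹ • Ss = α⁻¹ • (α • SL + Ss) := by
        rw [smul_add, smul_smul, inv_mul_cancel₀ hα0.ne', one_smul]
      rw [h1, Matrix.det_smul, Fintype.card_fin,
        Real.mul_rpow (by positivity) hKα.det_pos.le]
      congr 1
      rw [← Real.rpow_natCast α⁻¹ p, Real.inv_rpow hα0.le, ← Real.rpow_neg hα0.le,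
        ← Real.rpow_mul hα0.le]
      congr 1
      ring
    have hD0 : (0:ℝ) ≤ D := (norm_nonneg _).trans (hD 0 ⟨le_rfl, zero_le_one⟩)
    have hxm : (0:ℝ) < α ^ (-((n:ℝ) * p / 2)) := Real.rpow_pos_of_pos hα0 _
    have hx1 : (0:ℝ) < α ^ (a - 1) := Real.rpow_pos_of_pos hα0 _
    have hx2 : (0:ℝ) < (1 - α) ^ (b - 1) := Real.rpow_pos_of_pos (by linarith) _
    have main : ∀ Φe Ψe : ℝ, 0 ≤ Φe → Φe ≤ D → 0 < Ψe → Ψe ≤ E →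
        ‖α ^ (-((n:ℝ) * p / 2)) * Φe / (SL + Ss).det ^ ((n:ℝ)/2) * Ψe *
          (c0 * α ^ (a - 1) * (1 - α) ^ (b - 1))‖
        ≤ K * (α ^ (a - (n:ℝ) * p / 2 - 1) * (1 - α) ^ (b - 1)) := by
      intro Φe Ψe h1 h2 h3 h4
      have hA0 : 0 ≤ α ^ (-((n:ℝ) * p / 2)) * Φe / (SL + Ss).det ^ ((n:ℝ)/2) * Ψe :=
        mul_nonneg (div_nonneg (mul_nonneg hxm.le h1) hdA.le) h3.le
      rw [Real.norm_eq_abs, abs_mul, abs_of_nonneg hA0, abs_mul, abs_mul,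
        abs_of_pos hx1, abs_of_pos hx2]
      have hsplit : α ^ (a - (n:ℝ) * p / 2 - 1)
          = α ^ (-((n:ℝ) * p / 2)) * α ^ (a - 1) := by
        rw [← Real.rpow_add hα0]; congr 1; ring
      rw [hsplit, hK]
      have hL : α ^ (-((n:ℝ) * p / 2)) * Φe / (SL + Ss).det ^ ((n:ℝ)/2) * Ψe *
          (|c0| * α ^ (a - 1) * (1 - α) ^ (b - 1))
          = (Φe * Ψe) * (α ^ (-((n:ℝ) * p / 2)) * |c0| * α ^ (a - 1) * (1 - α) ^ (b - 1)
              / (SL + Ss).det ^ ((n:ℝ)/2)) := by ring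
      have hR : D * E * |c0| / (SL + Ss).det ^ ((n:ℝ)/2) *
          (α ^ (-((n:ℝ) * p / 2)) * α ^ (a - 1) * (1 - α) ^ (b - 1))
          = (D * E) * (α ^ (-((n:ℝ) * p / 2)) * |c0| * α ^ (a - 1) * (1 - α) ^ (b - 1)
              / (SL + Ss).det ^ ((n:ℝ)/2)) := by ring
      rw [hL, hR]
      refine mul_le_mul_of_nonneg_right (mul_le_mul h2 h4 h3.le hD0) ?_
      exact div_nonneg (mul_nonneg (mul_nonneg (mul_nonneg hxm.le (abs_nonneg _))
        hx1.le) hx2.le) hdA.le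
    rw [hdet_eq]
    refine main _ _ (Real.rpow_nonneg hKα.det_pos.le _) ?_ (Real.exp_pos _) ?_
    · exact (le_abs_self _).trans (by simpa [Real.norm_eq_abs] using hD α hαIcc)
    · exact (le_abs_self _).trans (by simpa [Real.norm_eq_abs] using hE α hαIcc)
end

section
/- For every α with (p+2n)/m_d < α < 1, one has χ(α) < 1, where χ(α) = α^(np/2)·det(I_n + (αk/(αk+1))·Ψ⁻¹E)^((α·m_d − n − 1)/2) / det(I_n + (k/(k+1))·Ψ⁻¹E)^((m_d − n − 1)/2). -/
open Matrix

lemma det_one_add_smul_eq_prod {m : ℕ} {M : Matrix (Fin m) (Fin m) ℝ}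
    (hM : M.IsHermitian) (t : ℝ) :
    ((1 : Matrix (Fin m) (Fin m) ℝ) + t • M).det
      = ∏ i, (1 + t * hM.eigenvalues i) := by
  set U : Matrix (Fin m) (Fin m) ℝ := (hM.eigenvectorUnitary : Matrix (Fin m) (Fin m) ℝ) with hUdef
  have hU : U * star U = 1 := (Matrix.mem_unitaryGroup_iff).mp hM.eigenvectorUnitary.2
  have key : (1 : Matrix (Fin m) (Fin m) ℝ) + t • M
      = U * ((1 : Matrix (Fin m) (Fin m) ℝ)
          + t • diagonal (RCLike.ofReal ∘ hM.eigenvalues)) * star U := by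
    rw [mul_add, add_mul, mul_one, hU, Matrix.mul_smul, Matrix.smul_mul,
      ← Unitary.conjStarAlgAut_apply (S := ℝ), ← hM.spectral_theorem]
  rw [key, det_mul_right_comm, hU, one_mul]
  have : (1 : Matrix (Fin m) (Fin m) ℝ)
      + t • diagonal (RCLike.ofReal ∘ hM.eigenvalues)
      = diagonal (fun i => 1 + t * hM.eigenvalues i) := by
    rw [← diagonal_one, ← diagonal_smul, ← diagonal_add]
    congr 1
  rw [this, det_diagonal]

/-- For every `α` with `(p+2n)/m_d < α < 1`, one has `χ(α) < 1`, where
`χ(α) = α^(np/2) det(I + (αk/(αk+1)) Ψ⁻¹E)^((α m_d − n − 1)/2) /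
        det(I + (k/(k+1)) Ψ⁻¹E)^((m_d − n − 1)/2)`. -/
theorem chi_lt_one
    (n p : ℕ) (hn : 0 < n) (hp : 0 < p)
    (Ψ : Matrix (Fin n) (Fin n) ℝ) (hΨ : Ψ.PosDef)
    (E : Matrix (Fin n) (Fin n) ℝ) (hE : E.PosSemidef)
    (k : ℝ) (hk : 0 < k)
    (md : ℝ) (hmd : (p : ℝ) + 2 * n < md)
    (α : ℝ) (hα₁ : ((p : ℝ) + 2 * n) / md < α) (hα₂ : α < 1) :
    α ^ ((n : ℝ) * p / 2) *
        ((1 : Matrix (Fin n) (Fin n) ℝ) + (α * k / (α * k + 1)) • (Ψ⁻¹ * E)).det ^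
          ((α * md - n - 1) / 2) /
        ((1 : Matrix (Fin n) (Fin n) ℝ) + (k / (k + 1)) • (Ψ⁻¹ * E)).det ^
          ((md - n - 1) / 2) < 1 := by
  have hn1 : (1 : ℝ) ≤ (n : ℝ) := by exact_mod_cast hn
  have hp1 : (1 : ℝ) ≤ (p : ℝ) := by exact_mod_cast hp
  have hmd0 : 0 < md := by nlinarith
  have hα0 : 0 < α := lt_trans (div_pos (by nlinarith) hmd0) hα₁
  -- square root of E and the symmetrized matrix
  open scoped MatrixOrder in set N : Matrix (Fin n) (Fin n) ℝ := CFC.sqrt E with hNdef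
  have hN : N.PosSemidef := open scoped MatrixOrder in (CFC.sqrt_nonneg E).posSemidef
  have hNN : N * N = E := open scoped MatrixOrder in CFC.sqrt_mul_sqrt_self E hE.nonneg
  have hMpsd : (N * Ψ⁻¹ * N).PosSemidef := by
    have := (hΨ.inv).posSemidef.conjTranspose_mul_mul_same N
    rwa [hN.1] at this
  set μ : Fin n → ℝ := hMpsd.1.eigenvalues with hμdef
  have hμ0 : ∀ i, 0 ≤ μ i := hMpsd.eigenvalues_nonneg
  -- the key determinant identity
  have hdet : ∀ t : ℝ, ((1 : Matrix (Fin n) (Fin n) ℝ) + t • (Ψ⁻¹ * E)).det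
      = ∏ i, (1 + t * μ i) := by
    intro t
    have h1 : t • (Ψ⁻¹ * E) = (t • (Ψ⁻¹ * N)) * N := by
      rw [Matrix.smul_mul, Matrix.mul_assoc, hNN]
    have h2 : (1 : Matrix (Fin n) (Fin n) ℝ) + N * (t • (Ψ⁻¹ * N))
        = 1 + t • (N * Ψ⁻¹ * N) := by
      rw [Matrix.mul_smul, ← Matrix.mul_assoc]
    rw [h1, det_one_add_mul_comm, h2, det_one_add_smul_eq_prod hMpsd.1]
  -- facts about the products
  have hprod_one_le : ∀ s : ℝ, 0 ≤ s → (1 : ℝ) ≤ ∏ i, (1 + s * μ i) := by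
    intro s hs
    have := Finset.prod_le_prod (s := Finset.univ) (f := fun _ : Fin n => (1 : ℝ))
      (g := fun i => 1 + s * μ i) (fun i _ => zero_le_one)
      (fun i _ => by show (1 : ℝ) ≤ 1 + s * μ i; nlinarith [hμ0 i])
    simpa using this
  have hprod_mono : ∀ s t : ℝ, 0 ≤ s → s ≤ t →
      (∏ i, (1 + s * μ i)) ≤ ∏ i, (1 + t * μ i) := by
    intro s t hs hst
    refine Finset.prod_le_prod (fun i _ => by nlinarith [hμ0 i]) fun i _ => by nlinarith [hμ0 i]
  -- the two scalars
  have hs0 : 0 ≤ α * k / (α * k + 1) := by positivity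
  have hst : α * k / (α * k + 1) ≤ k / (k + 1) := by
    rw [div_le_div_iff₀ (by positivity) (by positivity)]
    nlinarith
  set D₁ : ℝ := ∏ i, (1 + (α * k / (α * k + 1)) * μ i) with hD₁def
  set D₂ : ℝ := ∏ i, (1 + (k / (k + 1)) * μ i) with hD₂def
  have hD₁ : (1 : ℝ) ≤ D₁ := hprod_one_le _ hs0
  have hD₂ : (1 : ℝ) ≤ D₂ := hprod_one_le _ (by positivity)
  have hD₁₂ : D₁ ≤ D₂ := hprod_mono _ _ hs0 hst
  -- exponents
  have hαmd : (p : ℝ) + 2 * n < α * md := by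
    have := (div_lt_iff₀ hmd0).mp hα₁
    linarith
  have he1 : 0 < (α * md - n - 1) / 2 := by nlinarith
  have he12 : (α * md - n - 1) / 2 ≤ (md - n - 1) / 2 := by nlinarith
  have he2 : 0 < (md - n - 1) / 2 := lt_of_lt_of_le he1 he12
  -- put everything together
  rw [hdet, hdet]
  have hkey : D₁ ^ ((α * md - n - 1) / 2) ≤ D₂ ^ ((md - n - 1) / 2) := by
    calc D₁ ^ ((α * md - n - 1) / 2)
        ≤ D₂ ^ ((α * md - n - 1) / 2) :=
          Real.rpow_le_rpow (le_trans zero_le_one hD₁) hD₁₂ he1.le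
      _ ≤ D₂ ^ ((md - n - 1) / 2) :=
          Real.rpow_le_rpow_of_exponent_le hD₂ he12
  have hpos : 0 < D₂ ^ ((md - n - 1) / 2) :=
    Real.rpow_pos_of_pos (lt_of_lt_of_le one_pos hD₂) _
  have hα_lt : α ^ ((n : ℝ) * p / 2) < 1 :=
    Real.rpow_lt_one hα0.le hα₂ (by positivity)
  have hαpow_nonneg : 0 ≤ α ^ ((n : ℝ) * p / 2) := Real.rpow_nonneg hα0.le _
  calc α ^ ((n : ℝ) * p / 2) * D₁ ^ ((α * md - n - 1) / 2) / D₂ ^ ((md - n - 1) / 2)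
      ≤ α ^ ((n : ℝ) * p / 2) := by
        rw [div_le_iff₀ hpos]
        exact mul_le_mul_of_nonneg_left hkey hαpow_nonneg
    _ < 1 := hα_lt
end
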